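/- arXiv:1806.10459 — 2 statements merged into one kernel-verified Lean document; each statement's English description precedes it below -/
import Mathlib

section
/- Let f be a rational Herglotz–Nevanlinna function with μ < π̊(f) and τ = f(μ), ρ ∈ ℝ, and assume f is not identically equal to τ. Then f̂ := Θ(μ,τ,ρ,f) is again a rational Herglotz–Nevanlinna function, ind f̂ = ind f − 1, and its associated polynomials are given by f̂↑(λ) = (ρ f↑(λ) − (λ − μ + τρ) f↓(λ))/(λ − μ) and f̂↓(λ) = (f↑(λ) − τ f↓(λ))/(λ − μ), both quotients being polynomials. -/
open MeasureTheory Set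

/-- A rational Herglotz–Nevanlinna function
`f(λ) = h₀λ + h + ∑_{k=1}^{d} δ_k/(h_k − λ)` with `h₀ ≥ 0`, `δ_k > 0` and
strictly increasing poles `h₁ < ⋯ < h_d`. -/
structure RHN : Type where
  d : ℕ
  h0 : ℝ
  h : ℝ
  delta : Fin d → ℝ
  pole : Fin d → ℝ
  h0_nonneg : 0 ≤ h0
  delta_pos : ∀ k, 0 < delta k
  pole_strictMono : StrictMono pole

namespace RHN

/-- The value `f(x)`. -/
noncomputable def eval (f : RHN) (x : ℝ) : ℝ :=
  f.h0 * x + f.h + ∑ k, f.delta k / (f.pole k - x)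

/-- The normalizing constant `h₀′`. -/
noncomputable def h0' (f : RHN) : ℝ := if 0 < f.h0 then 1 / f.h0 else 1

/-- The polynomial `f↓(x) = h₀′ ∏ (h_k − x)` (as a function). -/
noncomputable def fdown (f : RHN) (x : ℝ) : ℝ := f.h0' * ∏ k, (f.pole k - x)

/-- The polynomial `f↑ = f ⬝ f↓` (as a function). -/
noncomputable def fup (f : RHN) (x : ℝ) : ℝ :=
  f.h0' * ((f.h0 * x + f.h) * ∏ k, (f.pole k - x)
    + ∑ k, f.delta k * ∏ j ∈ Finset.univ.erase k, (f.pole j - x))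

/-- The index `ind f = deg f↑ + deg f↓`, i.e. `2d+1` if `h₀ > 0` and `2d` if `h₀ = 0`. -/
noncomputable def index (f : RHN) : ℤ := 2 * f.d + (if 0 < f.h0 then 1 else 0)

/-- The smallest pole `π̊(f)` (equal to `+∞` when `f` has no poles). -/
noncomputable def mpole (f : RHN) : EReal :=
  if hd : 0 < f.d then ((f.pole ⟨0, hd⟩ : ℝ) : EReal) else (⊤ : EReal)

/-- `f` is a constant function (class `𝓡₀`). -/
def IsConst (f : RHN) : Prop := f.d = 0 ∧ f.h0 = 0

/-- The function `f + a`. -/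
def addConst (f : RHN) (a : ℝ) : RHN := { f with h := f.h + a }

/-- `Π_f(x)`: the number of poles of `f` not exceeding `x`. -/
noncomputable def poleCount (f : RHN) (x : ℝ) : ℕ := Nat.card {k : Fin f.d // f.pole k ≤ x}

end RHN

/-- A boundary coefficient: a rational Herglotz–Nevanlinna function, or `none` = `∞`
(the Dirichlet case). -/
abbrev BC := Option RHN

namespace BC

noncomputable def fup : BC → ℝ → ℝ
  | none => fun _ => -1
  | some f => f.fup

noncomputable def fdown : BC → ℝ → ℝ
  | none => fun _ => 0
  | some f => f.fdown

noncomputable def index : BC → ℤ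
  | none => -1
  | some f => f.index

noncomputable def mpole : BC → EReal
  | none => (⊤ : EReal)
  | some f => f.mpole

noncomputable def poleCount : BC → ℝ → ℕ
  | none => fun _ => 0
  | some f => f.poleCount

end BC

/-- `f↑′(x)f↓(x) − f↑(x)f↓′(x)`, the expression appearing in the norming constants
(it equals `f′(x)f↓²(x)` away from the poles). -/
noncomputable def wronskLike (f : BC) (x : ℝ) : ℝ :=
  deriv (BC.fup f) x * BC.fdown f x - BC.fup f x * deriv (BC.fdown f) x

/-- `s` is real-valued, belongs to `L²(0,π)` and has zero mean. -/
def AdmissibleS (s : ℝ → ℝ) : Prop :=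
  MemLp s 2 (volume.restrict (Set.Icc 0 Real.pi)) ∧ (∫ x in (0:ℝ)..Real.pi, s x) = 0

/-- `(y, w)` is a solution of `−(y^{[1]})′ − s y^{[1]} − s² y = λ y` on `[0,π]`, where
`w = y^{[1]} = y′ − s y` is the quasi-derivative; both `y` and `w` are absolutely
continuous, being integrals of integrable functions. -/
def IsSolution (s : ℝ → ℝ) (lam : ℝ) (y w : ℝ → ℝ) : Prop :=
  IntegrableOn (fun t => w t + s t * y t) (Set.Icc 0 Real.pi) ∧
  IntegrableOn (fun t => -(s t) * w t - (s t) ^ 2 * y t - lam * y t) (Set.Icc 0 Real.pi) ∧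
  (∀ x ∈ Set.Icc 0 Real.pi, y x = y 0 + ∫ t in (0:ℝ)..x, (w t + s t * y t)) ∧
  (∀ x ∈ Set.Icc 0 Real.pi,
    w x = w 0 + ∫ t in (0:ℝ)..x, (-(s t) * w t - (s t) ^ 2 * y t - lam * y t))

/-- `lam` is an eigenvalue of the boundary value problem `𝒫(s,f,F)`. -/
def IsEigenvalue (s : ℝ → ℝ) (f F : BC) (lam : ℝ) : Prop :=
  ∃ y w : ℝ → ℝ, IsSolution s lam y w ∧ (y 0 ≠ 0 ∨ w 0 ≠ 0) ∧
    BC.fdown f lam * w 0 + BC.fup f lam * y 0 = 0 ∧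
    BC.fup F lam * y Real.pi - BC.fdown F lam * w Real.pi = 0

/-- `lam 0 < lam 1 < ⋯` is the increasing enumeration of all eigenvalues of `𝒫(s,f,F)`. -/
def IsSpectrum (s : ℝ → ℝ) (f F : BC) (lam : ℕ → ℝ) : Prop :=
  StrictMono lam ∧ ∀ x : ℝ, IsEigenvalue s f F x ↔ ∃ n, lam n = x

/-- `gam` is the norming constant of `𝒫(s,f,F)` corresponding to the eigenvalue `lam`:
`γ = ∫₀^π φ² + (f↑′f↓ − f↑f↓′)(λ) + (1/β²)(F↑′F↓ − F↑F↓′)(λ)` where `φ` is the solution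
with `φ(0) = f↓(λ)`, `φ^{[1]}(0) = −f↑(λ)`, `ψ` the solution with `ψ(π) = F↓(λ)`,
`ψ^{[1]}(π) = F↑(λ)`, and `ψ = βφ`. -/
def IsNormingConstant (s : ℝ → ℝ) (f F : BC) (lam gam : ℝ) : Prop :=
  ∃ y w Y W : ℝ → ℝ, ∃ b : ℝ,
    IsSolution s lam y w ∧ y 0 = BC.fdown f lam ∧ w 0 = -(BC.fup f lam) ∧
    IsSolution s lam Y W ∧ Y Real.pi = BC.fdown F lam ∧ W Real.pi = BC.fup F lam ∧
    b ≠ 0 ∧ (∀ x ∈ Set.Icc 0 Real.pi, Y x = b * y x) ∧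
    gam = (∫ x in (0:ℝ)..Real.pi, (y x) ^ 2) + wronskLike f lam + (1 / b ^ 2) * wronskLike F lam

/-- `{lam n, gam n}` is the spectral data of `𝒫(s,f,F)`. -/
def IsSpectralData (s : ℝ → ℝ) (f F : BC) (lam gam : ℕ → ℝ) : Prop :=
  IsSpectrum s f F lam ∧ ∀ n, IsNormingConstant s f F (lam n) (gam n)

/-- `g = Θ(μ,τ,ρ,f)`, i.e. `g(λ) = (μ − λ)/(f(λ) − τ) + ρ`, with the conventions
`Θ(μ,τ,ρ,f) = ∞` if `f ≡ τ` and `Θ(μ,τ,ρ,∞) = ρ`. -/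
def IsTheta (mu tau rho : ℝ) : BC → BC → Prop
  | none, some g => g.d = 0 ∧ g.h0 = 0 ∧ g.h = rho
  | none, none => False
  | some f, none => ∀ x, f.eval x = tau
  | some f, some g => (¬ ∀ x, f.eval x = tau) ∧
      ∀ x, f.fdown x ≠ 0 → f.eval x ≠ tau → g.fdown x ≠ 0 →
        g.eval x = (mu - x) / (f.eval x - tau) + rho

/-- The common part of the transformations `T̂` and `T̃`: given the factorizing solution
`(v, w)` (with `w = v^{[1]}`) of the original equation at the value `Λ`, the transformed
potential is `st = s − 2v′/v + (2/π)ln(v(π)/v(0)) = −s − 2w/v + (2/π)ln(v(π)/v(0))`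
(a.e. on `[0,π]`) and the transformed boundary coefficients are the indicated
`Θ`-transforms of `f` and `F`. -/
def TransfCore (s : ℝ → ℝ) (f F : BC) (Lam : ℝ) (v w : ℝ → ℝ)
    (st : ℝ → ℝ) (ft Ft : BC) : Prop :=
  (∀ x ∈ Set.Icc 0 Real.pi, v x ≠ 0) ∧
  (∀ᵐ x ∂(volume : Measure ℝ), x ∈ Set.Icc 0 Real.pi →
    st x = -(s x) - 2 * w x / v x + (2 / Real.pi) * Real.log (v Real.pi / v 0)) ∧
  IsTheta Lam (-(w 0) / v 0) (-(w 0) / v 0 + (2 / Real.pi) * Real.log (v Real.pi / v 0)) f ft ∧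
  IsTheta Lam (w Real.pi / v Real.pi)
    (w Real.pi / v Real.pi - (2 / Real.pi) * Real.log (v Real.pi / v 0)) F Ft

/-- The shift `Λ` used in the transformation `T̂`: `Λ = λ₀` if `f, F ≠ ∞` and
`Λ = λ₀ − 2` otherwise. -/
def hatLam (f F : BC) (lam0 : ℝ) : ℝ := if f.isSome && F.isSome then lam0 else lam0 - 2

/-- `(st, ft, Ft) = T̂(s, f, F)`, where `lam0` is the smallest eigenvalue of `𝒫(s,f,F)`;
the factorizing solution is `v = φ(·,Λ)` if `f ≠ ∞` and `v = ψ(·,Λ)` if `f = ∞`. -/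
def IsHatT (s : ℝ → ℝ) (f F : BC) (lam0 : ℝ) (st : ℝ → ℝ) (ft Ft : BC) : Prop :=
  ∃ v w : ℝ → ℝ,
    IsSolution s (hatLam f F lam0) v w ∧
    (if f.isSome then
        v 0 = BC.fdown f (hatLam f F lam0) ∧ w 0 = -(BC.fup f (hatLam f F lam0))
      else
        v Real.pi = BC.fdown F (hatLam f F lam0) ∧ w Real.pi = BC.fup F (hatLam f F lam0)) ∧
    TransfCore s f F (hatLam f F lam0) v w st ft Ft

/-- `(st, ft, Ft) = T̃(μ, ν, s, f, F)`, where `lam0 = λ̊(s,f,F)` and `gam0 = γ̊(s,f,F)`;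
the three disjuncts correspond to the three pieces `S̃₁`, `S̃₂`, `S̃₃` of the domain `S̃`. -/
def IsTildeT (mu nu : ℝ) (s : ℝ → ℝ) (f F : BC) (lam0 gam0 : ℝ)
    (st : ℝ → ℝ) (ft Ft : BC) : Prop :=
  (mu < lam0 ∧ 0 < nu ∧
    ∃ Cy Cw Sy Sw : ℝ → ℝ, ∃ kap rho : ℝ,
      IsSolution s mu Cy Cw ∧ Cy 0 = 1 ∧ Cw 0 = 0 ∧
      IsSolution s mu Sy Sw ∧ Sy 0 = 0 ∧ Sw 0 = 1 ∧
      BC.fup F mu * Sy Real.pi - BC.fdown F mu * Sw Real.pi ≠ 0 ∧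
      kap = (BC.fup F mu * Cy Real.pi - BC.fdown F mu * Cw Real.pi) /
            (BC.fup F mu * Sy Real.pi - BC.fdown F mu * Sw Real.pi) ∧
      nu + BC.fdown f mu * (kap * BC.fdown f mu - BC.fup f mu) ≠ 0 ∧
      rho = (nu * kap + BC.fup f mu * (kap * BC.fdown f mu - BC.fup f mu)) /
            (nu + BC.fdown f mu * (kap * BC.fdown f mu - BC.fup f mu)) ∧
      TransfCore s f F mu (fun x => Cy x - rho * Sy x) (fun x => Cw x - rho * Sw x) st ft Ft) ∨
  ((∃ f' : RHN, f = some f' ∧ f'.IsConst) ∧ mu = lam0 ∧ nu = gam0 / 2 ∧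
    ∃ v w : ℝ → ℝ, IsSolution s (mu - 2) v w ∧
      v 0 = BC.fdown f (mu - 2) ∧ w 0 = -(BC.fup f (mu - 2)) ∧
      TransfCore s f F (mu - 2) v w st ft Ft) ∨
  ((∃ F' : RHN, F = some F' ∧ F'.IsConst) ∧ mu = lam0 ∧ nu = 2 * gam0 ∧
    ∃ v w : ℝ → ℝ, IsSolution s (mu - 2) v w ∧
      v Real.pi = BC.fdown F (mu - 2) ∧ w Real.pi = BC.fup F (mu - 2) ∧
      TransfCore s f F (mu - 2) v w st ft Ft)


section ThetaAuxiliary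
open Polynomial Finset


lemma aux_lin_natDegree (a : ℝ) : (C a - X).natDegree = 1 := by
  rw [show C a - X = -(X - C a) by ring, natDegree_neg, natDegree_X_sub_C]

lemma aux_lin_ne_zero (a : ℝ) : (C a - X) ≠ 0 := fun h => by
  have := aux_lin_natDegree a; rw [h] at this; simp at this

lemma aux_lin_leadingCoeff (a : ℝ) : (C a - X).leadingCoeff = -1 := by
  rw [show C a - X = -(X - C a) by ring, leadingCoeff_neg, (monic_X_sub_C a).leadingCoeff]

lemma aux_prodLin_natDegree {ι : Type*} (s : Finset ι) (a : ι → ℝ) :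
    (∏ k ∈ s, (C (a k) - X)).natDegree = s.card := by
  rw [natDegree_prod _ _ (fun k _ => aux_lin_ne_zero (a k))]
  simp [aux_lin_natDegree]

lemma aux_prodLin_coeff_card {ι : Type*} (s : Finset ι) (a : ι → ℝ) :
    (∏ k ∈ s, (C (a k) - X)).coeff s.card = (-1) ^ s.card := by
  have h1 : (∏ k ∈ s, (C (a k) - X)).leadingCoeff = (-1) ^ s.card := by
    rw [leadingCoeff_prod]; simp [aux_lin_leadingCoeff]
  have h2 := coeff_natDegree (p := ∏ k ∈ s, (C (a k) - X))
  rw [aux_prodLin_natDegree s a] at h2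
  rw [h2, h1]

lemma aux_prodLin_eval {ι : Type*} (s : Finset ι) (a : ι → ℝ) (x : ℝ) :
    (∏ k ∈ s, (C (a k) - X)).eval x = ∏ k ∈ s, (a k - x) := by
  simp [eval_prod]

lemma aux_poly_eq_zero (D : ℝ[X]) (n : ℕ) (s : Finset ℝ)
    (hd : D.natDegree ≤ n) (hc : ∀ j, s.card ≤ j → j ≤ n → D.coeff j = 0)
    (h0 : ∀ x ∈ s, D.eval x = 0) : D = 0 := by
  by_contra hD
  have h1 : D.natDegree < s.card := by
    by_contra h'
    push_neg at h'
    exact (leadingCoeff_ne_zero.mpr hD) (hc _ h' hd)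
  exact hD (D.eq_zero_of_natDegree_lt_card_of_eval_eq_zero' s h0 h1)


lemma aux_prod_pos_alt {ι : Type*} [DecidableEq ι] (s : Finset ι) (g : ι → ℝ)
    (h0 : ∀ j ∈ s, g j ≠ 0) :
    0 < (-1:ℝ) ^ ((s.filter (fun j => g j < 0)).card) * ∏ j ∈ s, g j := by
  classical
  induction s using Finset.induction with
  | empty => simp
  | @insert j s hj ih =>
    have hne := h0 j (mem_insert_self j s)
    have ih' := ih (fun i hi => h0 i (mem_insert_of_mem hi))
    rw [prod_insert hj, filter_insert]
    by_cases hgj : g j < 0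
    · rw [if_pos hgj, card_insert_of_notMem (fun h => hj (mem_filter.mp h).1), pow_succ]
      have : (-1:ℝ) ^ #(filter (fun j => g j < 0) s) * -1 * (g j * ∏ i ∈ s, g i)
          = (-g j) * ((-1:ℝ) ^ #(filter (fun j => g j < 0) s) * ∏ i ∈ s, g i) := by ring
      rw [this]
      exact mul_pos (by linarith) ih'
    · rw [if_neg hgj]
      have hpos : 0 < g j := lt_of_le_of_ne (not_lt.mp hgj) (Ne.symm hne)
      have : (-1:ℝ) ^ #(filter (fun j => g j < 0) s) * (g j * ∏ i ∈ s, g i)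
          = g j * ((-1:ℝ) ^ #(filter (fun j => g j < 0) s) * ∏ i ∈ s, g i) := by ring
      rw [this]
      exact mul_pos hpos ih'

lemma aux_card_filter_lt (n : ℕ) (m : ℕ) (hm : m ≤ n) :
    ((univ : Finset (Fin n)).filter (fun j : Fin n => (j : ℕ) < m)).card = m := by
  have h1 : ((univ : Finset (Fin n)).filter (fun j : Fin n => (j : ℕ) < m)).image Fin.val
      = Finset.range m := by
    ext i
    simp only [Finset.mem_image, Finset.mem_filter, Finset.mem_univ, true_and, Finset.mem_range]
    constructor
    · rintro ⟨j, hj, rfl⟩; exact hj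
    · intro hi; exact ⟨⟨i, lt_of_lt_of_le hi hm⟩, hi, rfl⟩
  have := Finset.card_image_of_injective
    ((univ : Finset (Fin n)).filter (fun j : Fin n => (j : ℕ) < m)) (Fin.val_injective)
  rw [h1, Finset.card_range] at this
  omega

lemma aux_sign_erase_prod {n : ℕ} (a : Fin n → ℝ) (ha : StrictMono a) (k : Fin n) :
    0 < (-1:ℝ) ^ (k : ℕ) * ∏ j ∈ univ.erase k, (a j - a k) := by
  classical
  have h := aux_prod_pos_alt (univ.erase k) (fun j => a j - a k)
    (fun j hj => sub_ne_zero.mpr (fun h => (mem_erase.mp hj).1 (ha.injective h)))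
  have hcard : ((univ.erase k).filter (fun j => a j - a k < 0)).card = (k : ℕ) := by
    have : (univ.erase k).filter (fun j => a j - a k < 0)
        = (univ : Finset (Fin n)).filter (fun j : Fin n => (j : ℕ) < (k : ℕ)) := by
      ext j
      simp only [Finset.mem_filter, Finset.mem_erase, Finset.mem_univ, true_and, sub_neg, and_true]
      constructor
      · rintro ⟨hne, hlt⟩; exact ha.lt_iff_lt.mp hlt
      · intro hlt
        have hjk : j < k := hlt
        exact ⟨ne_of_lt hjk, ha hjk⟩
    rw [this, aux_card_filter_lt n k k.isLt.le]
  rwa [hcard] at h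

lemma aux_sign_prod_lt {n : ℕ} (a : Fin n → ℝ) (ha : StrictMono a) (b : ℝ) (m : ℕ)
    (hmn : m ≤ n) (hiff : ∀ j, a j < b ↔ (j : ℕ) < m) (hne : ∀ j, a j ≠ b) :
    0 < (-1:ℝ) ^ m * ∏ j, (a j - b) := by
  classical
  have h := aux_prod_pos_alt univ (fun j => a j - b)
    (fun j _ => sub_ne_zero.mpr (hne j))
  have hcard : ((univ : Finset (Fin n)).filter (fun j => a j - b < 0)).card = m := by
    have : (univ : Finset (Fin n)).filter (fun j => a j - b < 0)
        = (univ : Finset (Fin n)).filter (fun j : Fin n => (j : ℕ) < m) := by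
      ext j; simp only [Finset.mem_filter, Finset.mem_univ, true_and, sub_neg, hiff]
    rw [this, aux_card_filter_lt n m hmn]
  rwa [hcard] at h

lemma aux_mul_neg_of_alt {m : ℕ} {x y : ℝ} (hx : 0 < (-1:ℝ) ^ m * x)
    (hy : 0 < (-1:ℝ) ^ (m + 1) * y) : x * y < 0 := by
  have h1 : ((-1:ℝ) ^ m) ^ 2 = 1 := by
    rw [← pow_mul, mul_comm, pow_mul]; norm_num
  rw [pow_succ] at hy
  nlinarith [mul_pos hx hy]

lemma aux_div_pos_of_alt {m : ℕ} {x y : ℝ} (hx : 0 < (-1:ℝ) ^ m * x)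
    (hy : 0 < (-1:ℝ) ^ m * y) : 0 < x / y := by
  have h1 : ((-1:ℝ) ^ m) ≠ 0 := pow_ne_zero _ (by norm_num)
  rw [← mul_div_mul_left x y h1]
  exact div_pos hx hy

lemma aux_exists_root_Ioo (p : ℝ[X]) (a b : ℝ) (hab : a < b)
    (h : p.eval a * p.eval b < 0) : ∃ z ∈ Set.Ioo a b, p.eval z = 0 := by
  have hc : ContinuousOn (fun x => p.eval x) (Set.Icc a b) := p.continuous_aeval.continuousOn
  rcases lt_or_ge (p.eval a) 0 with ha | ha
  · have hb : 0 < p.eval b := by nlinarith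
    have := intermediate_value_Ioo hab.le hc
    have h0 : (0:ℝ) ∈ Set.Ioo (p.eval a) (p.eval b) := ⟨ha, hb⟩
    obtain ⟨z, hz, hz0⟩ := this h0
    exact ⟨z, hz, hz0⟩
  · have hb : p.eval b < 0 := by nlinarith
    have ha' : 0 < p.eval a := by nlinarith
    have := intermediate_value_Ioo' hab.le hc
    obtain ⟨z, hz, hz0⟩ := this (⟨hb, ha'⟩ : (0:ℝ) ∈ Set.Ioo (p.eval b) (p.eval a))
    exact ⟨z, hz, hz0⟩

section AuxRHN
open Polynomial Finset

/-- polynomial for f↓ -/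
noncomputable def pDownP (f : RHN) : Polynomial ℝ :=
  Polynomial.C f.h0' * ∏ k, (Polynomial.C (f.pole k) - Polynomial.X)

/-- polynomial for f↑ -/
noncomputable def pUpP (f : RHN) : Polynomial ℝ :=
  Polynomial.C f.h0' * ((Polynomial.C f.h0 * Polynomial.X + Polynomial.C f.h) *
      ∏ k, (Polynomial.C (f.pole k) - Polynomial.X)
    + ∑ k, Polynomial.C (f.delta k) *
        ∏ j ∈ Finset.univ.erase k, (Polynomial.C (f.pole j) - Polynomial.X))

noncomputable def pPol (f : RHN) (tau : ℝ) : Polynomial ℝ :=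
  pUpP f - Polynomial.C tau * pDownP f

lemma aux_h0'_pos (f : RHN) : 0 < f.h0' := by
  unfold RHN.h0'
  split
  · rename_i h; positivity
  · norm_num

lemma aux_eval_pDownP (f : RHN) (x : ℝ) : (pDownP f).eval x = f.fdown x := by
  simp [pDownP, RHN.fdown, eval_prod]

lemma aux_eval_pUpP (f : RHN) (x : ℝ) : (pUpP f).eval x = f.fup x := by
  simp [pUpP, RHN.fup, eval_prod, eval_finset_sum]

lemma aux_eval_pPol (f : RHN) (tau : ℝ) (x : ℝ) :
    (pPol f tau).eval x = f.fup x - tau * f.fdown x := by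
  simp [pPol, aux_eval_pDownP, aux_eval_pUpP]

lemma aux_natDegree_pDownP (f : RHN) : (pDownP f).natDegree = f.d := by
  rw [pDownP, natDegree_C_mul (by have := aux_h0'_pos f; positivity),
    aux_prodLin_natDegree]
  simp

lemma aux_coeff_pDownP_d (f : RHN) : (pDownP f).coeff f.d = f.h0' * (-1) ^ f.d := by
  rw [pDownP, coeff_C_mul]
  have := aux_prodLin_coeff_card (univ : Finset (Fin f.d)) f.pole
  rw [card_univ, Fintype.card_fin] at this
  rw [this]

lemma aux_natDegree_pUpP_le (f : RHN) : (pUpP f).natDegree ≤ f.d + 1 := by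
  apply le_trans (natDegree_C_mul_le _ _)
  apply le_trans (natDegree_add_le _ _)
  apply max_le
  · apply le_trans (natDegree_mul_le)
    have h1 : (Polynomial.C f.h0 * Polynomial.X + Polynomial.C f.h).natDegree ≤ 1 := by
      apply le_trans (natDegree_add_le _ _)
      simp [natDegree_C_mul_le]
      exact le_trans (natDegree_C_mul_le _ _) (by simp)
    have h2 := aux_prodLin_natDegree (univ : Finset (Fin f.d)) f.pole
    rw [card_univ, Fintype.card_fin] at h2
    omega
  · apply le_trans (natDegree_sum_le_of_forall_le _ _ (fun k _ => ?_)) (by omega : f.d ≤ f.d + 1)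
    apply le_trans (natDegree_C_mul_le _ _)
    have h2 := aux_prodLin_natDegree (univ.erase k) f.pole
    rw [h2, card_erase_of_mem (mem_univ k), card_univ, Fintype.card_fin]
    omega

end AuxRHN

section AuxRHN2
open Polynomial Finset

lemma aux_sumPart_coeff (f : RHN) (j : ℕ) (hj : f.d ≤ j) :
    (∑ k, Polynomial.C (f.delta k) *
        ∏ i ∈ Finset.univ.erase k, (Polynomial.C (f.pole i) - Polynomial.X)).coeff j = 0 := by
  rw [finset_sum_coeff]
  apply Finset.sum_eq_zero
  intro k _
  rw [coeff_C_mul]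
  have h1 := aux_prodLin_natDegree (univ.erase k) f.pole
  rw [card_erase_of_mem (Finset.mem_univ k), card_univ, Fintype.card_fin] at h1
  have h2 : (∏ i ∈ Finset.univ.erase k, (Polynomial.C (f.pole i) - Polynomial.X)).natDegree < j := by
    rw [h1]; have := k.pos; omega
  rw [coeff_eq_zero_of_natDegree_lt h2, mul_zero]

lemma aux_pq_coeff_d (f : RHN) :
    (∏ k, (Polynomial.C (f.pole k) - Polynomial.X)).coeff f.d = (-1) ^ f.d := by
  have := aux_prodLin_coeff_card (univ : Finset (Fin f.d)) f.pole
  rwa [card_univ, Fintype.card_fin] at this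

lemma aux_pq_natDegree (f : RHN) :
    (∏ k, (Polynomial.C (f.pole k) - Polynomial.X)).natDegree = f.d := by
  have := aux_prodLin_natDegree (univ : Finset (Fin f.d)) f.pole
  rwa [card_univ, Fintype.card_fin] at this

lemma aux_coeff_pUpP_top (f : RHN) :
    (pUpP f).coeff (f.d + 1) = f.h0' * (f.h0 * (-1) ^ f.d) := by
  rw [pUpP, coeff_C_mul, coeff_add, aux_sumPart_coeff f _ (by omega)]
  have hT1 : (Polynomial.C f.h0 * Polynomial.X + Polynomial.C f.h) *
      ∏ k, (Polynomial.C (f.pole k) - Polynomial.X)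
      = Polynomial.C f.h0 * (Polynomial.X * ∏ k, (Polynomial.C (f.pole k) - Polynomial.X))
        + Polynomial.C f.h * ∏ k, (Polynomial.C (f.pole k) - Polynomial.X) := by ring
  rw [hT1, coeff_add, coeff_C_mul, coeff_C_mul, coeff_X_mul, aux_pq_coeff_d,
    coeff_eq_zero_of_natDegree_lt (by rw [aux_pq_natDegree]; omega), mul_zero, add_zero, add_zero]

lemma aux_coeff_pUpP_d (f : RHN) (h : f.h0 = 0) :
    (pUpP f).coeff f.d = f.h0' * (f.h * (-1) ^ f.d) := by
  rw [pUpP, coeff_C_mul, coeff_add, aux_sumPart_coeff f _ (le_refl _)]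
  have hT1 : (Polynomial.C f.h0 * Polynomial.X + Polynomial.C f.h) *
      ∏ k, (Polynomial.C (f.pole k) - Polynomial.X)
      = Polynomial.C f.h0 * (Polynomial.X * ∏ k, (Polynomial.C (f.pole k) - Polynomial.X))
        + Polynomial.C f.h * ∏ k, (Polynomial.C (f.pole k) - Polynomial.X) := by ring
  rw [hT1, coeff_add, coeff_C_mul, coeff_C_mul, aux_pq_coeff_d, h]
  ring

lemma aux_natDegree_pUpP_le_d (f : RHN) (h : f.h0 = 0) : (pUpP f).natDegree ≤ f.d := by
  rw [pUpP, h]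
  apply le_trans (natDegree_C_mul_le _ _)
  apply le_trans (natDegree_add_le _ _)
  apply max_le
  · apply le_trans (natDegree_mul_le)
    have h1 : (Polynomial.C (0:ℝ) * Polynomial.X + Polynomial.C f.h).natDegree = 0 := by
      simp
    rw [h1, aux_pq_natDegree]; omega
  · apply natDegree_sum_le_of_forall_le _ _ (fun k _ => ?_)
    apply le_trans (natDegree_C_mul_le _ _)
    have h2 := aux_prodLin_natDegree (univ.erase k) f.pole
    rw [h2, card_erase_of_mem (Finset.mem_univ k), card_univ, Fintype.card_fin]
    omega

lemma aux_eval_mul_fdown (f : RHN) (x : ℝ) (hx : ∀ k, f.pole k ≠ x) :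
    f.eval x * f.fdown x = f.fup x := by
  unfold RHN.eval RHN.fdown RHN.fup
  have key : (∑ k, f.delta k / (f.pole k - x)) * ∏ k, (f.pole k - x)
      = ∑ k, f.delta k * ∏ j ∈ Finset.univ.erase k, (f.pole j - x) := by
    rw [Finset.sum_mul]
    refine Finset.sum_congr rfl fun k _ => ?_
    rw [← Finset.mul_prod_erase _ _ (Finset.mem_univ k)]
    have hne : f.pole k - x ≠ 0 := sub_ne_zero.mpr (hx k)
    field_simp
  have expand : (f.h0 * x + f.h + ∑ k, f.delta k / (f.pole k - x)) *
      (f.h0' * ∏ k, (f.pole k - x))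
      = f.h0' * ((f.h0 * x + f.h) * ∏ k, (f.pole k - x)
        + (∑ k, f.delta k / (f.pole k - x)) * ∏ k, (f.pole k - x)) := by ring
  rw [expand, key]

lemma aux_fup_pole (f : RHN) (k : Fin f.d) :
    f.fup (f.pole k) = f.h0' * (f.delta k * ∏ j ∈ Finset.univ.erase k, (f.pole j - f.pole k)) := by
  unfold RHN.fup
  have h1 : (∏ j, (f.pole j - f.pole k)) = 0 :=
    Finset.prod_eq_zero (Finset.mem_univ k) (sub_self _)
  rw [h1, mul_zero, zero_add]
  congr 1
  apply Finset.sum_eq_single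
  · intro j _ hjk
    have : (∏ i ∈ Finset.univ.erase j, (f.pole i - f.pole k)) = 0 :=
      Finset.prod_eq_zero (Finset.mem_erase.mpr ⟨Ne.symm hjk, mem_univ k⟩) (sub_self _)
    rw [this, mul_zero]
  · intro h; exact absurd (Finset.mem_univ k) h

lemma aux_fdown_pole (f : RHN) (k : Fin f.d) : f.fdown (f.pole k) = 0 := by
  unfold RHN.fdown
  have h1 : (∏ j, (f.pole j - f.pole k)) = 0 :=
    Finset.prod_eq_zero (Finset.mem_univ k) (sub_self _)
  rw [h1, mul_zero]

lemma aux_sign_pPol_pole (f : RHN) (tau : ℝ) (k : Fin f.d) :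
    0 < (-1:ℝ) ^ (k : ℕ) * (pPol f tau).eval (f.pole k) := by
  rw [aux_eval_pPol, aux_fdown_pole, mul_zero, sub_zero, aux_fup_pole]
  have h1 := aux_sign_erase_prod f.pole f.pole_strictMono k
  have h2 : f.h0' * f.delta k > 0 := mul_pos (aux_h0'_pos f) (f.delta_pos k)
  calc (0:ℝ) < (f.h0' * f.delta k) * ((-1:ℝ) ^ (k:ℕ) * ∏ j ∈ univ.erase k, (f.pole j - f.pole k)) :=
        mul_pos h2 h1
    _ = (-1:ℝ) ^ (k:ℕ) * (f.h0' * (f.delta k * ∏ j ∈ univ.erase k, (f.pole j - f.pole k))) := by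
        ring

end AuxRHN2

section Master
open Polynomial Finset

lemma aux_master (f : RHN) (mu tau rho : ℝ)
    (hmupole : ∀ k, mu < f.pole k) (htau : tau = f.eval mu)
    (hnc : ¬ ∀ x, f.eval x = tau)
    (dh : ℕ) (hdd : dh ≤ f.d) (hE : f.d ≤ dh + 1) (h0h : ℝ) (hh0h : 0 ≤ h0h)
    (hidx : 2 * (dh : ℤ) + (if 0 < h0h then 1 else 0) = f.index - 1)
    (hA : (pPol f tau).natDegree ≤ dh + 1)
    (hB : (pPol f tau).coeff (dh + 1) = (if 0 < h0h then 1 / h0h else 1) * (-1) ^ dh)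
    (hC : (if 0 < h0h then 1 / h0h else 1) * h0h * (-1) ^ dh + (pDownP f).coeff (dh + 1) = 0)
    (u : Fin dh → ℝ)
    (hu1 : ∀ k : Fin dh, f.pole (Fin.castLE hdd k) < u k)
    (hu2 : ∀ k : Fin dh,
      (pPol f tau).eval (f.pole (Fin.castLE hdd k)) * (pPol f tau).eval (u k) < 0)
    (hu3 : ∀ (k : Fin dh) (m : Fin f.d), (k : ℕ) < (m : ℕ) → u k ≤ f.pole m) :
    ∃ g : RHN, IsTheta mu tau rho (some f) (some g) ∧
      g.index = f.index - 1 ∧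
      (∀ x : ℝ, (x - mu) * g.fup x = rho * f.fup x - (x - mu + tau * rho) * f.fdown x) ∧
      (∀ x : ℝ, (x - mu) * g.fdown x = f.fup x - tau * f.fdown x) := by
  classical
  set e : ℝ := if 0 < h0h then 1 / h0h else 1 with he
  have hepos : 0 < e := by
    rw [he]; split
    · rename_i hpos; positivity
    · norm_num
  have hene : e ≠ 0 := ne_of_gt hepos
  -- construct the new poles as roots of pPol f tau
  have hz : ∀ k : Fin dh, ∃ z, z ∈ Set.Ioo (f.pole (Fin.castLE hdd k)) (u k) ∧
      (pPol f tau).eval z = 0 :=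
    fun k => aux_exists_root_Ioo _ _ _ (hu1 k) (hu2 k)
  choose ζ hζmem hζroot using hz
  have hζlb : ∀ k, f.pole (Fin.castLE hdd k) < ζ k := fun k => (hζmem k).1
  have hζub : ∀ k, ζ k < u k := fun k => (hζmem k).2
  have hζlt : ∀ (k : Fin dh) (m : Fin f.d), (k : ℕ) < (m : ℕ) → ζ k < f.pole m :=
    fun k m h => (hζub k).trans_le (hu3 k m h)
  have hζmono : StrictMono ζ := by
    intro a b hab
    have h1 : ζ a < f.pole (Fin.castLE hdd b) := hζlt a (Fin.castLE hdd b) (by simpa using hab)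
    exact h1.trans (hζlb b)
  have hζpole_iff : ∀ (k : Fin dh) (m : Fin f.d), f.pole m < ζ k ↔ (m : ℕ) ≤ (k : ℕ) := by
    intro k m
    constructor
    · intro h
      by_contra hc
      push_neg at hc
      exact absurd h (not_lt.mpr (hζlt k m hc).le)
    · intro h
      have h1 : f.pole m ≤ f.pole (Fin.castLE hdd k) :=
        f.pole_strictMono.monotone (by simpa [Fin.le_def] using h)
      exact h1.trans_lt (hζlb k)
  have hζμ : ∀ k, mu < ζ k := fun k => (hmupole _).trans (hζlb k)
  have hζnep : ∀ (k : Fin dh) (m : Fin f.d), f.pole m ≠ ζ k := by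
    intro k m
    rcases le_or_gt (m : ℕ) (k : ℕ) with h | h
    · exact ne_of_lt ((hζpole_iff k m).mpr h)
    · exact ne_of_gt (hζlt k m h)
  have hfdζsign : ∀ k : Fin dh, 0 < (-1:ℝ) ^ ((k : ℕ) + 1) * f.fdown (ζ k) := by
    intro k
    have hs := aux_sign_prod_lt f.pole f.pole_strictMono (ζ k) ((k : ℕ) + 1)
      (by have := k.isLt; omega)
      (fun j => by rw [hζpole_iff k j]; omega) (hζnep k)
    unfold RHN.fdown
    have : (-1:ℝ) ^ ((k : ℕ) + 1) * (f.h0' * ∏ j, (f.pole j - ζ k))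
        = f.h0' * ((-1:ℝ) ^ ((k : ℕ) + 1) * ∏ j, (f.pole j - ζ k)) := by ring
    rw [this]
    exact mul_pos (aux_h0'_pos f) hs
  have hfdζ : ∀ k, f.fdown (ζ k) ≠ 0 := by
    intro k h
    have := hfdζsign k
    rw [h, mul_zero] at this
    exact lt_irrefl _ this
  have hprodζne : ∀ k : Fin dh, (∏ j ∈ univ.erase k, (ζ j - ζ k)) ≠ 0 := by
    intro k h
    have := aux_sign_erase_prod ζ hζmono k
    rw [h, mul_zero] at this
    exact lt_irrefl _ this
  set δh : Fin dh → ℝ := fun k => -(f.fdown (ζ k)) / (e * ∏ j ∈ univ.erase k, (ζ j - ζ k))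
    with hδh
  have hδpos : ∀ k, 0 < δh k := by
    intro k
    have h1 : 0 < (-1:ℝ) ^ (k : ℕ) * (-(f.fdown (ζ k))) := by
      have h0 : (-1:ℝ) ^ (k : ℕ) * (-(f.fdown (ζ k)))
          = (-1:ℝ) ^ ((k : ℕ) + 1) * f.fdown (ζ k) := by rw [pow_succ]; ring
      rw [h0]; exact hfdζsign k
    have h2 : 0 < (-1:ℝ) ^ (k : ℕ) * (e * ∏ j ∈ univ.erase k, (ζ j - ζ k)) := by
      have h0 : (-1:ℝ) ^ (k : ℕ) * (e * ∏ j ∈ univ.erase k, (ζ j - ζ k))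
          = e * ((-1:ℝ) ^ (k : ℕ) * ∏ j ∈ univ.erase k, (ζ j - ζ k)) := by ring
      rw [h0]
      exact mul_pos hepos (aux_sign_erase_prod ζ hζmono k)
    exact aux_div_pos_of_alt h1 h2
  -- polynomials for the new function
  set q : Polynomial ℝ := ∏ k : Fin dh, (Polynomial.C (ζ k) - Polynomial.X) with hq
  set sq : Polynomial ℝ := ∑ k : Fin dh, Polynomial.C (δh k) *
    ∏ j ∈ univ.erase k, (Polynomial.C (ζ j) - Polynomial.X) with hsq
  have hqdeg : q.natDegree = dh := by
    rw [hq]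
    have := aux_prodLin_natDegree (univ : Finset (Fin dh)) ζ
    rwa [card_univ, Fintype.card_fin] at this
  have hqcoeff : q.coeff dh = (-1) ^ dh := by
    rw [hq]
    have := aux_prodLin_coeff_card (univ : Finset (Fin dh)) ζ
    rwa [card_univ, Fintype.card_fin] at this
  have hqcoeff1 : q.coeff (dh + 1) = 0 :=
    coeff_eq_zero_of_natDegree_lt (by rw [hqdeg]; omega)
  have hsqdeg : sq.natDegree ≤ dh := by
    rw [hsq]
    apply natDegree_sum_le_of_forall_le _ _ (fun k _ => ?_)
    apply le_trans (natDegree_C_mul_le _ _)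
    have h2 := aux_prodLin_natDegree (univ.erase k) ζ
    rw [h2, card_erase_of_mem (Finset.mem_univ k), card_univ, Fintype.card_fin]
    omega
  set D20 : Polynomial ℝ := Polynomial.C e * (Polynomial.C h0h * Polynomial.X * q + sq)
    - Polynomial.C rho * (Polynomial.C e * q) + pDownP f with hD20
  set hh : ℝ := -(D20.coeff dh) * (-1) ^ dh / e with hhh
  -- part I: (X - mu) * (C e * q) = pPol f tau
  set D1 : Polynomial ℝ := Polynomial.C e * ((Polynomial.X - Polynomial.C mu) * q) - pPol f tau
    with hD1
  have hD1deg : D1.natDegree ≤ dh + 1 := by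
    rw [hD1]
    apply le_trans (natDegree_sub_le _ _)
    apply max_le _ hA
    apply le_trans (natDegree_C_mul_le _ _)
    apply le_trans natDegree_mul_le
    rw [natDegree_X_sub_C, hqdeg]
    omega
  have hD1coefftop : D1.coeff (dh + 1) = 0 := by
    rw [hD1, coeff_sub, coeff_C_mul, hB]
    have hexp : (Polynomial.X - Polynomial.C mu) * q
        = Polynomial.X * q - Polynomial.C mu * q := by ring
    rw [hexp, coeff_sub, coeff_X_mul, hqcoeff, coeff_C_mul, hqcoeff1, mul_zero, sub_zero]
    ring
  have hμeq : f.fup mu = tau * f.fdown mu := by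
    have h := aux_eval_mul_fdown f mu (fun k => ne_of_gt (hmupole k))
    rw [← h, htau]
  have hqeval : ∀ x, q.eval x = ∏ k, (ζ k - x) := by
    intro x; rw [hq]; simp [eval_prod]
  have hqζ : ∀ k, q.eval (ζ k) = 0 := by
    intro k
    rw [hqeval]
    exact Finset.prod_eq_zero (Finset.mem_univ k) (sub_self _)
  set S : Finset ℝ := insert mu (Finset.image ζ univ) with hS
  have hcardS : S.card = dh + 1 := by
    rw [hS, Finset.card_insert_of_notMem, Finset.card_image_of_injective _ hζmono.injective,
      card_univ, Fintype.card_fin]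
    intro h
    obtain ⟨k, _, hk⟩ := Finset.mem_image.mp h
    exact absurd hk (ne_of_gt (hζμ k))
  have hD1root : ∀ x ∈ S, D1.eval x = 0 := by
    intro x hx
    rcases Finset.mem_insert.mp hx with rfl | hx
    · simp [hD1, aux_eval_pPol, hμeq]
    · obtain ⟨k, _, rfl⟩ := Finset.mem_image.mp hx
      simp [hD1, hqζ k, aux_eval_pPol]
      have h := hζroot k
      rw [aux_eval_pPol] at h
      linarith
  have hD1zero : D1 = 0 := by
    apply aux_poly_eq_zero D1 (dh + 1) S hD1deg _ hD1root
    intro j hj hj'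
    rw [hcardS] at hj
    have : j = dh + 1 := by omega
    rw [this]
    exact hD1coefftop
  have idI : ∀ x, (x - mu) * (e * ∏ k, (ζ k - x)) = f.fup x - tau * f.fdown x := by
    intro x
    have h := congrArg (Polynomial.eval x) hD1zero
    rw [hD1] at h
    simp only [eval_sub, eval_mul, eval_C, eval_X, eval_zero] at h
    rw [aux_eval_pPol, hqeval] at h
    linarith
  -- part II
  set D2 : Polynomial ℝ := Polynomial.C e *
      ((Polynomial.C h0h * Polynomial.X + Polynomial.C hh) * q + sq)
    - Polynomial.C rho * (Polynomial.C e * q) + pDownP f with hD2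
  have hD2eq : D2 = D20 + Polynomial.C (hh * e) * q := by
    rw [hD2, hD20, Polynomial.C_mul]
    ring
  have hpow1 : ((-1:ℝ) ^ dh) * ((-1:ℝ) ^ dh) = 1 := by
    rw [← mul_pow]; norm_num
  have hD2coeff_dh : D2.coeff dh = 0 := by
    rw [hD2eq, coeff_add, coeff_C_mul, hqcoeff]
    have hhe : hh * e = -(D20.coeff dh) * (-1) ^ dh := by
      rw [hhh, div_mul_cancel₀ _ hene]
    rw [hhe, mul_assoc, hpow1, mul_one]
    ring
  have hD2coeff_top : D2.coeff (dh + 1) = 0 := by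
    rw [hD2eq, coeff_add, coeff_C_mul, hqcoeff1, mul_zero, add_zero, hD20]
    rw [coeff_add, coeff_sub, coeff_C_mul, coeff_C_mul, coeff_add, mul_assoc,
      coeff_C_mul, coeff_X_mul, hqcoeff, coeff_eq_zero_of_natDegree_lt (by omega : sq.natDegree < dh + 1),
      coeff_C_mul, hqcoeff1]
    have := hC
    nlinarith [hC]
  have hD2deg : D2.natDegree ≤ dh + 1 := by
    rw [hD2]
    apply le_trans (natDegree_add_le _ _)
    apply max_le
    · apply le_trans (natDegree_sub_le _ _)
      apply max_le
      · apply le_trans (natDegree_C_mul_le _ _)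
        apply le_trans (natDegree_add_le _ _)
        apply max_le _ (by omega)
        apply le_trans natDegree_mul_le
        have h1 : (Polynomial.C h0h * Polynomial.X + Polynomial.C hh).natDegree ≤ 1 := by
          apply le_trans (natDegree_add_le _ _)
          apply max_le (le_trans (natDegree_C_mul_le _ _) (by simp)) (by simp)
        omega
      · apply le_trans (natDegree_C_mul_le _ _)
        apply le_trans (natDegree_C_mul_le _ _)
        omega
    · rw [aux_natDegree_pDownP]
      omega
  have hD2root : ∀ x ∈ Finset.image ζ univ, D2.eval x = 0 := by
    intro x hx
    obtain ⟨k, _, rfl⟩ := Finset.mem_image.mp hx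
    have hsqeval : sq.eval (ζ k) = δh k * ∏ j ∈ univ.erase k, (ζ j - ζ k) := by
      rw [hsq, eval_finset_sum]
      have hcollapse : ∑ j : Fin dh, (Polynomial.C (δh j) *
          ∏ i ∈ univ.erase j, (Polynomial.C (ζ i) - Polynomial.X)).eval (ζ k)
          = (Polynomial.C (δh k) *
            ∏ i ∈ univ.erase k, (Polynomial.C (ζ i) - Polynomial.X)).eval (ζ k) := by
        apply Finset.sum_eq_single
        · intro j _ hjk
          have hz : (∏ i ∈ univ.erase j, (Polynomial.C (ζ i) - Polynomial.X)).eval (ζ k)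
              = 0 := by
            rw [aux_prodLin_eval]
            exact Finset.prod_eq_zero (Finset.mem_erase.mpr ⟨Ne.symm hjk, Finset.mem_univ k⟩)
              (sub_self _)
          rw [eval_mul, hz, mul_zero]
        · intro h; exact absurd (Finset.mem_univ k) h
      rw [hcollapse, eval_mul, eval_C, aux_prodLin_eval]
    have hδcancel : e * (δh k * ∏ j ∈ univ.erase k, (ζ j - ζ k)) = -(f.fdown (ζ k)) := by
      have hne2 : e * ∏ j ∈ univ.erase k, (ζ j - ζ k) ≠ 0 :=
        mul_ne_zero hene (hprodζne k)
      rw [hδh]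
      simp only
      rw [div_mul_eq_mul_div, mul_div_assoc']
      rw [show e * (-(f.fdown (ζ k)) * ∏ j ∈ univ.erase k, (ζ j - ζ k))
          = (-(f.fdown (ζ k))) * (e * ∏ j ∈ univ.erase k, (ζ j - ζ k)) by ring]
      rw [mul_div_assoc, div_self hne2, mul_one]
    have hfinal : e * ((h0h * (ζ k) + hh) * (q.eval (ζ k)) + sq.eval (ζ k))
        - rho * (e * q.eval (ζ k)) + f.fdown (ζ k) = 0 := by
      rw [hqζ k, hsqeval]
      have h2 : e * ((h0h * (ζ k) + hh) * (0:ℝ) + δh k * ∏ j ∈ univ.erase k, (ζ j - ζ k))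
          - rho * (e * 0) + f.fdown (ζ k)
          = e * (δh k * ∏ j ∈ univ.erase k, (ζ j - ζ k)) + f.fdown (ζ k) := by ring
      rw [h2, hδcancel]
      ring
    rw [hD2]
    simp only [eval_add, eval_sub, eval_mul, eval_C, eval_X]
    rw [aux_eval_pDownP]
    exact hfinal
  have hD2zero : D2 = 0 := by
    apply aux_poly_eq_zero D2 (dh + 1) (Finset.image ζ univ) hD2deg _ hD2root
    intro j hj hj'
    rw [Finset.card_image_of_injective _ hζmono.injective, card_univ, Fintype.card_fin] at hj
    have : j = dh ∨ j = dh + 1 := by omega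
    rcases this with rfl | rfl
    · exact hD2coeff_dh
    · exact hD2coeff_top
  have hsqeval' : ∀ x, sq.eval x = ∑ k, δh k * ∏ j ∈ univ.erase k, (ζ j - x) := by
    intro x
    rw [hsq, eval_finset_sum]
    refine Finset.sum_congr rfl fun k _ => ?_
    rw [eval_mul, eval_C, aux_prodLin_eval]
  have idII : ∀ x, e * ((h0h * x + hh) * ∏ k, (ζ k - x)
      + ∑ k, δh k * ∏ j ∈ univ.erase k, (ζ j - x))
      = rho * (e * ∏ k, (ζ k - x)) - f.fdown x := by
    intro x
    have h := congrArg (Polynomial.eval x) hD2zero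
    rw [hD2] at h
    simp only [eval_add, eval_sub, eval_mul, eval_C, eval_X, eval_zero] at h
    rw [aux_eval_pDownP, hqeval, hsqeval' x] at h
    linarith
  -- the new RHN function
  set g : RHN := ⟨dh, h0h, hh, δh, ζ, hh0h, hδpos, hζmono⟩ with hg
  have hgfd : ∀ x, g.fdown x = e * ∏ k, (ζ k - x) := fun x => by
    show (if 0 < h0h then 1 / h0h else 1) * ∏ k, (ζ k - x) = e * ∏ k, (ζ k - x)
    rw [← he]
  have hgfu : ∀ x, g.fup x = e * ((h0h * x + hh) * ∏ k, (ζ k - x)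
      + ∑ k, δh k * ∏ j ∈ univ.erase k, (ζ j - x)) := fun x => by
    show (if 0 < h0h then 1 / h0h else 1) * ((h0h * x + hh) * ∏ k, (ζ k - x)
      + ∑ k, δh k * ∏ j ∈ univ.erase k, (ζ j - x)) = _
    rw [← he]
  have hgIdII : ∀ x, g.fup x = rho * g.fdown x - f.fdown x := fun x => by
    rw [hgfu x, hgfd x]
    exact idII x
  have hgIdI : ∀ x, (x - mu) * g.fdown x = f.fup x - tau * f.fdown x := fun x => by
    rw [hgfd x]
    exact idI x
  refine ⟨g, ⟨hnc, ?_⟩, ?_, ?_, hgIdI⟩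
  · -- the Theta identity
    intro x hfdx hfex hgdx
    have hζnex : ∀ k, g.pole k ≠ x := by
      intro k hk
      have hk' : ζ k = x := hk
      apply hgdx
      rw [hgfd x, Finset.prod_eq_zero (Finset.mem_univ k) (by rw [hk', sub_self]), mul_zero]
    have hfpne : ∀ k, f.pole k ≠ x := by
      intro k hk
      apply hfdx
      unfold RHN.fdown
      rw [Finset.prod_eq_zero (Finset.mem_univ k) (by rw [hk, sub_self]), mul_zero]
    have hfm := aux_eval_mul_fdown f x hfpne
    have hgm := aux_eval_mul_fdown g x hζnex
    have hfe' : f.eval x - tau ≠ 0 := sub_ne_zero.mpr hfex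
    have h1' : (x - mu) * g.fdown x = (f.eval x - tau) * f.fdown x := by
      rw [hgIdI x, ← hfm]
      ring
    have e1 : (g.eval x - rho) * g.fdown x = -(f.fdown x) := by
      have h3 : g.eval x * g.fdown x = rho * g.fdown x - f.fdown x := by
        rw [hgm, hgIdII x]
      calc (g.eval x - rho) * g.fdown x = g.eval x * g.fdown x - rho * g.fdown x := by ring
        _ = -(f.fdown x) := by rw [h3]; ring
    have key : (g.eval x - rho) * (f.eval x - tau) = mu - x := by
      have e2 : ((g.eval x - rho) * (f.eval x - tau)) * f.fdown x = (mu - x) * f.fdown x := by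
        calc ((g.eval x - rho) * (f.eval x - tau)) * f.fdown x
            = (g.eval x - rho) * ((f.eval x - tau) * f.fdown x) := by ring
          _ = (g.eval x - rho) * ((x - mu) * g.fdown x) := by rw [← h1']
          _ = (x - mu) * ((g.eval x - rho) * g.fdown x) := by ring
          _ = (x - mu) * (-(f.fdown x)) := by rw [e1]
          _ = (mu - x) * f.fdown x := by ring
      exact mul_right_cancel₀ hfdx e2
    have hfin : g.eval x - rho = (mu - x) / (f.eval x - tau) := by
      rw [eq_div_iff hfe']
      exact key
    linarith [hfin]
  · -- index
    show 2 * (dh : ℤ) + (if 0 < h0h then 1 else 0) = f.index - 1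
    exact hidx
  · -- the fup identity
    intro x
    calc (x - mu) * g.fup x
        = rho * ((x - mu) * g.fdown x) - (x - mu) * f.fdown x := by rw [hgIdII x]; ring
      _ = rho * (f.fup x - tau * f.fdown x) - (x - mu) * f.fdown x := by rw [hgIdI x]
      _ = rho * f.fup x - (x - mu + tau * rho) * f.fdown x := by ring
end Master

end ThetaAuxiliary

open Polynomial Finset in
/-- If `μ < π̊(f)`, `τ = f(μ)` and `f ≢ τ`, then `f̂ = Θ(μ,τ,ρ,f)` is again a rational
Herglotz–Nevanlinna function, `ind f̂ = ind f − 1`, and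
`(λ−μ) f̂↑(λ) = ρ f↑(λ) − (λ−μ+τρ) f↓(λ)`, `(λ−μ) f̂↓(λ) = f↑(λ) − τ f↓(λ)`
(so both quotients are polynomials). -/
theorem theta_decreases_index
    (f : RHN) (mu tau rho : ℝ)
    (hmu : (mu : EReal) < f.mpole) (htau : tau = f.eval mu)
    (hnc : ¬ ∀ x : ℝ, f.eval x = tau) :
    ∃ g : RHN, IsTheta mu tau rho (some f) (some g) ∧
      g.index = f.index - 1 ∧
      (∀ x : ℝ, (x - mu) * g.fup x = rho * f.fup x - (x - mu + tau * rho) * f.fdown x) ∧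
      (∀ x : ℝ, (x - mu) * g.fdown x = f.fup x - tau * f.fdown x) := by
  classical
  rcases Nat.eq_zero_or_pos f.d with hd0 | hdpos
  · -- case d = 0
    have hie : IsEmpty (Fin f.d) := by rw [hd0]; infer_instance
    have hempty : (Finset.univ : Finset (Fin f.d)) = ∅ := Finset.univ_eq_empty
    have hfeval : ∀ x, f.eval x = f.h0 * x + f.h := by
      intro x; unfold RHN.eval; rw [hempty, Finset.sum_empty, add_zero]
    have hh0pos : 0 < f.h0 := by
      rcases (f.h0_nonneg).eq_or_lt with h | h
      · exfalso
        apply hnc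
        intro x
        rw [hfeval x, htau, hfeval mu, ← h]
        ring
      · exact h
    have hfdown : ∀ x, f.fdown x = 1 / f.h0 := by
      intro x
      unfold RHN.fdown RHN.h0'
      rw [if_pos hh0pos, hempty, Finset.prod_empty, mul_one]
    have hfup : ∀ x, f.fup x = (1 / f.h0) * (f.h0 * x + f.h) := by
      intro x
      unfold RHN.fup RHN.h0'
      rw [if_pos hh0pos, hempty, Finset.prod_empty, Finset.sum_empty, mul_one, add_zero]
    have hh0ne : f.h0 ≠ 0 := ne_of_gt hh0pos
    refine ⟨⟨0, 0, rho - 1 / f.h0, Fin.elim0, Fin.elim0, le_refl 0,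
      fun k => k.elim0, fun k => k.elim0⟩, ⟨hnc, ?_⟩, ?_, ?_, ?_⟩
    · intro x hfd hfe hgd
      have hgev : RHN.eval ⟨0, 0, rho - 1 / f.h0, Fin.elim0, Fin.elim0, le_refl 0,
          fun k => k.elim0, fun k => k.elim0⟩ x = rho - 1 / f.h0 := by
        show (0:ℝ) * x + (rho - 1 / f.h0) + ∑ k : Fin 0, Fin.elim0 k / (Fin.elim0 k - x)
          = rho - 1 / f.h0
        simp
      rw [hgev]
      rw [hfeval x, htau, hfeval mu] at hfe ⊢
      have hxmu : x - mu ≠ 0 := by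
        intro h
        apply hfe
        have : x = mu := by linarith [sub_eq_zero.mp h]
        rw [this]
      have hne : f.h0 * x + f.h - (f.h0 * mu + f.h) = f.h0 * (x - mu) := by ring
      rw [hne]
      field_simp
      ring
    · show (2 * ((0:ℕ):ℤ) + if (0:ℝ) < 0 then 1 else 0) = f.index - 1
      unfold RHN.index
      rw [if_pos hh0pos, hd0]
      norm_num
    · intro x
      have hgup : RHN.fup ⟨0, 0, rho - 1 / f.h0, Fin.elim0, Fin.elim0, le_refl 0,
          fun k => k.elim0, fun k => k.elim0⟩ x = rho - 1 / f.h0 := by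
        show (if (0:ℝ) < 0 then 1 / 0 else 1) *
          (((0:ℝ) * x + (rho - 1 / f.h0)) * ∏ k : Fin 0, (Fin.elim0 k - x)
            + ∑ k : Fin 0, Fin.elim0 k * ∏ j ∈ Finset.univ.erase k, (Fin.elim0 j - x))
          = rho - 1 / f.h0
        simp
      rw [hgup, hfup x, hfdown x, htau, hfeval mu]
      field_simp
      ring
    · intro x
      have hgdown : RHN.fdown ⟨0, 0, rho - 1 / f.h0, Fin.elim0, Fin.elim0, le_refl 0,
          fun k => k.elim0, fun k => k.elim0⟩ x = 1 := by
        show (if (0:ℝ) < 0 then 1 / 0 else 1) * ∏ k : Fin 0, (Fin.elim0 k - x) = 1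
        simp
      rw [hgdown, hfup x, hfdown x, htau, hfeval mu]
      field_simp
      ring
  · -- case d ≥ 1
    have hμpole : ∀ k, mu < f.pole k := by
      intro k
      have h0 : mu < f.pole ⟨0, hdpos⟩ := by
        unfold RHN.mpole at hmu
        rw [dif_pos hdpos] at hmu
        exact_mod_cast hmu
      rcases eq_or_lt_of_le (show (⟨0, hdpos⟩ : Fin f.d) ≤ k from Fin.mk_le_of_le_val
        (Nat.zero_le _)) with h | h
      · rwa [← h]
      · exact h0.trans (f.pole_strictMono h)
    have hsign := fun k => aux_sign_pPol_pole f tau k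
    rcases (f.h0_nonneg).eq_or_lt with h0zero | h0pos
    · -- h0 = 0 : dh = d - 1, new h0 = 1/(tau - h)
      have h0z : f.h0 = 0 := h0zero.symm
      have hh0' : f.h0' = 1 := by
        unfold RHN.h0'
        rw [if_neg (by rw [h0z]; exact lt_irrefl 0)]
      have hτh : f.h < tau := by
        rw [htau]
        unfold RHN.eval
        rw [h0z]
        have hpos : 0 < ∑ k, f.delta k / (f.pole k - mu) := by
          apply Finset.sum_pos
          · intro k _
            exact div_pos (f.delta_pos k) (sub_pos.mpr (hμpole k))
          · exact ⟨⟨0, hdpos⟩, Finset.mem_univ _⟩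
        linarith
      have hτhne : tau - f.h ≠ 0 := by intro h; linarith [sub_eq_zero.mp h]
      have hτhpos : 0 < tau - f.h := by linarith
      have hh0hpos : 0 < 1 / (tau - f.h) := by positivity
      have hdh1 : (f.d - 1) + 1 = f.d := by omega
      have hepos' : (if 0 < 1 / (tau - f.h) then 1 / (1 / (tau - f.h)) else 1)
          = tau - f.h := by rw [if_pos hh0hpos, one_div_one_div]
      apply aux_master f mu tau rho hμpole htau hnc (f.d - 1) (by omega) (by omega)
        (1 / (tau - f.h)) (le_of_lt hh0hpos) ?_ ?_ ?_ ?_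
        (fun k => f.pole ⟨(k : ℕ) + 1, by have := k.isLt; omega⟩) ?_ ?_ ?_
      · -- index
        rw [if_pos hh0hpos]
        unfold RHN.index
        rw [if_neg (by rw [h0z]; exact lt_irrefl 0)]
        have : ((f.d - 1 : ℕ) : ℤ) = (f.d : ℤ) - 1 := by
          rw [Nat.cast_sub hdpos]; norm_num
        rw [this]
        ring
      · -- hA
        rw [hdh1, pPol]
        apply le_trans (natDegree_sub_le _ _)
        apply max_le (aux_natDegree_pUpP_le_d f h0z)
        apply le_trans (natDegree_C_mul_le _ _)
        rw [aux_natDegree_pDownP]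
      · -- hB
        have hps : (-1:ℝ) ^ f.d = -((-1:ℝ) ^ (f.d - 1)) := by
          conv_lhs => rw [← hdh1]
          rw [pow_succ]
          ring
        rw [hdh1, hepos', pPol, coeff_sub, coeff_C_mul, aux_coeff_pUpP_d f h0z,
          aux_coeff_pDownP_d, hh0', hps]
        ring
      · -- hC
        have hps : (-1:ℝ) ^ f.d = -((-1:ℝ) ^ (f.d - 1)) := by
          conv_lhs => rw [← hdh1]
          rw [pow_succ]
          ring
        rw [hdh1, hepos', aux_coeff_pDownP_d, hh0', hps, mul_one_div, div_self hτhne]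
        ring
      · -- hu1
        intro k
        apply f.pole_strictMono
        simp [Fin.lt_def]
      · -- hu2
        intro k
        have h1 := hsign (Fin.castLE (by omega) k)
        have h2 := hsign ⟨(k : ℕ) + 1, by have := k.isLt; omega⟩
        exact aux_mul_neg_of_alt h1 h2
      · -- hu3
        intro k m hkm
        apply f.pole_strictMono.monotone
        simp [Fin.le_def]
        omega
    · -- h0 > 0 : dh = d
      have hh0' : f.h0' = 1 / f.h0 := by unfold RHN.h0'; rw [if_pos h0pos]
      have hBval : (pPol f tau).coeff (f.d + 1) = (-1) ^ f.d := by
        rw [pPol, coeff_sub, coeff_C_mul, aux_coeff_pUpP_top,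
          coeff_eq_zero_of_natDegree_lt (by rw [aux_natDegree_pDownP]; omega), mul_zero,
          sub_zero, hh0']
        field_simp
      have hAval : (pPol f tau).natDegree ≤ f.d + 1 := by
        rw [pPol]
        apply le_trans (natDegree_sub_le _ _)
        apply max_le (aux_natDegree_pUpP_le f)
        apply le_trans (natDegree_C_mul_le _ _)
        rw [aux_natDegree_pDownP]
        omega
      -- find M beyond all poles with the right sign
      have hdeg : (pPol f tau).natDegree = f.d + 1 :=
        le_antisymm hAval (le_natDegree_of_ne_zero
          (by rw [hBval]; exact pow_ne_zero _ (by norm_num)))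
      have hlead : (pPol f tau).leadingCoeff = (-1) ^ f.d := by
        rw [Polynomial.leadingCoeff, hdeg, hBval]
      set T : Polynomial ℝ := Polynomial.C ((-1:ℝ) ^ f.d) * pPol f tau with hT
      have hTlead : T.leadingCoeff = 1 := by
        rw [hT, leadingCoeff_mul, leadingCoeff_C, hlead, ← mul_pow]
        norm_num
      have hTdeg : 0 < T.degree := by
        have h1 : T.natDegree = f.d + 1 := by
          rw [hT, natDegree_C_mul (pow_ne_zero _ (by norm_num : (-1:ℝ) ≠ 0)), hdeg]
        rw [← natDegree_pos_iff_degree_pos, h1]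
        omega
      have htend := Polynomial.tendsto_atTop_of_leadingCoeff_nonneg T hTdeg
        (by rw [hTlead]; norm_num)
      have hpole_ne : (Finset.univ.image f.pole).Nonempty :=
        ⟨f.pole ⟨0, hdpos⟩, Finset.mem_image_of_mem _ (Finset.mem_univ _)⟩
      obtain ⟨M, hM1, hM2⟩ := ((htend.eventually_ge_atTop 1).and
        (Filter.eventually_gt_atTop ((Finset.univ.image f.pole).max' hpole_ne))).exists
      have hMpole : ∀ k, f.pole k < M := fun k =>
        lt_of_le_of_lt (Finset.le_max' _ _ (Finset.mem_image_of_mem _ (Finset.mem_univ k))) hM2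
      have hMsign : 0 < (-1:ℝ) ^ f.d * (pPol f tau).eval M := by
        have hTe : T.eval M = (-1:ℝ) ^ f.d * (pPol f tau).eval M := by
          rw [hT, eval_mul, eval_C]
        rw [← hTe]
        linarith [hM1]
      apply aux_master f mu tau rho hμpole htau hnc f.d (le_refl _) (by omega) 0 (le_refl 0)
        ?_ ?_ ?_ ?_
        (fun k : Fin f.d => if h : (k : ℕ) + 1 < f.d then f.pole ⟨(k : ℕ) + 1, h⟩ else M)
        ?_ ?_ ?_
      · -- index
        rw [if_neg (lt_irrefl (0:ℝ))]
        unfold RHN.index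
        rw [if_pos h0pos]
        ring
      · exact hAval
      · rw [if_neg (lt_irrefl (0:ℝ)), hBval, one_mul]
      · rw [if_neg (lt_irrefl (0:ℝ)),
          coeff_eq_zero_of_natDegree_lt (by rw [aux_natDegree_pDownP]; omega)]
        ring
      · -- hu1
        intro k
        by_cases h : (k : ℕ) + 1 < f.d
        · simp only [dif_pos h]
          apply f.pole_strictMono
          simp [Fin.lt_def]
        · simp only [dif_neg h]
          exact hMpole _
      · -- hu2
        intro k
        by_cases h : (k : ℕ) + 1 < f.d
        · simp only [dif_pos h]
          exact aux_mul_neg_of_alt (hsign (Fin.castLE (le_refl _) k)) (hsign ⟨(k : ℕ) + 1, h⟩)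
        · simp only [dif_neg h]
          have hk : (k : ℕ) + 1 = f.d := by have := k.isLt; omega
          apply aux_mul_neg_of_alt (hsign (Fin.castLE (le_refl _) k))
          rw [show ((Fin.castLE (le_refl f.d) k : Fin f.d) : ℕ) + 1 = f.d from hk]
          exact hMsign
      · -- hu3
        intro k m hkm
        by_cases h : (k : ℕ) + 1 < f.d
        · simp only [dif_pos h]
          apply f.pole_strictMono.monotone
          rw [Fin.le_def]
          simp
          omega
        · exact absurd (by have := m.isLt; omega : (k : ℕ) + 1 < f.d) h
end

section
/- Let f be a rational Herglotz–Nevanlinna function with μ < π̊(f), τ ≥ f(μ), ρ ∈ ℝ, and let f̂ := Θ(μ,τ,ρ,f). If both f and f̂ have at least one pole (i.e., ind f ≥ 2 and ind f̂ ≥ 2), then the poles of f and of f̂ strictly interlace: between any two consecutive poles of f lies exactly one pole of f̂ and vice versa. Moreover, π̊(f) < π̊(f̂) if τ = f(μ), and π̊(f) > π̊(f̂) if τ > f(μ). -/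
open MeasureTheory Set

section ThetaAux
open Polynomial Filter Topology

namespace RHN

variable (f : RHN)

lemma h0'_ne : f.h0' ≠ 0 := by
  unfold h0'
  split
  · exact (one_div_pos.mpr (by assumption)).ne'
  · exact one_ne_zero

/-- Polynomial `Q = ∏ (h_k - X)`. -/
noncomputable def pQ : Polynomial ℝ := ∏ k, (Polynomial.C (f.pole k) - Polynomial.X)

/-- Polynomial `P` with `P/Q = f`. -/
noncomputable def pP : Polynomial ℝ :=
  (Polynomial.C f.h0 * Polynomial.X + Polynomial.C f.h) * f.pQ
    + ∑ k, Polynomial.C (f.delta k) *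
        ∏ j ∈ Finset.univ.erase k, (Polynomial.C (f.pole j) - Polynomial.X)

lemma pQ_eval (x : ℝ) : f.pQ.eval x = ∏ k, (f.pole k - x) := by
  simp [pQ, eval_prod]

lemma pQ_eval_ne_zero_iff (x : ℝ) : f.pQ.eval x ≠ 0 ↔ ∀ k, f.pole k ≠ x := by
  rw [pQ_eval]
  simp [Finset.prod_ne_zero_iff, sub_ne_zero]

lemma pQ_eval_zero_iff (x : ℝ) : f.pQ.eval x = 0 ↔ ∃ k, f.pole k = x := by
  rw [pQ_eval]
  simp [Finset.prod_eq_zero_iff, sub_eq_zero]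

lemma pP_eval (x : ℝ) :
    f.pP.eval x = (f.h0 * x + f.h) * ∏ k, (f.pole k - x)
      + ∑ k, f.delta k * ∏ j ∈ Finset.univ.erase k, (f.pole j - x) := by
  simp [pP, pQ_eval, eval_finset_sum, eval_prod]

lemma pP_eval_eq {x : ℝ} (hx : ∀ k, f.pole k ≠ x) :
    f.pP.eval x = f.eval x * f.pQ.eval x := by
  rw [pP_eval, pQ_eval, RHN.eval]
  conv_rhs => rw [add_mul, Finset.sum_mul]
  congr 1
  refine Finset.sum_congr rfl fun k _ => ?_
  rw [← Finset.mul_prod_erase Finset.univ _ (Finset.mem_univ k)]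
  have h := sub_ne_zero.mpr (hx k)
  field_simp

lemma pP_eval_pole (k : Fin f.d) :
    f.pP.eval (f.pole k) = f.delta k * ∏ j ∈ Finset.univ.erase k, (f.pole j - f.pole k) := by
  have hz : ∏ j, (f.pole j - f.pole k) = 0 :=
    Finset.prod_eq_zero (Finset.mem_univ k) (sub_self (f.pole k))
  rw [pP_eval, hz, mul_zero, zero_add]
  rw [Finset.sum_eq_single k]
  · intro j _ hj
    have hz2 : ∏ i ∈ Finset.univ.erase j, (f.pole i - f.pole k) = 0 :=
      Finset.prod_eq_zero (Finset.mem_erase.mpr ⟨hj.symm, Finset.mem_univ k⟩)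
        (sub_self (f.pole k))
    rw [hz2, mul_zero]
  · exact fun h => absurd (Finset.mem_univ k) h

lemma pP_eval_pole_ne (k : Fin f.d) : f.pP.eval (f.pole k) ≠ 0 := by
  rw [pP_eval_pole]
  refine mul_ne_zero (f.delta_pos k).ne' (Finset.prod_ne_zero_iff.mpr fun j hj => ?_)
  exact sub_ne_zero.mpr (f.pole_strictMono.injective.ne (Finset.ne_of_mem_erase hj))

lemma pQ_ne_zero (hd : 0 < f.d) : f.pQ ≠ 0 := by
  intro h
  have h2 : f.pQ.eval (f.pole ⟨0, hd⟩ - 1) ≠ 0 := by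
    rw [pQ_eval]
    refine (Finset.prod_pos fun j _ => ?_).ne'
    have : f.pole ⟨0, hd⟩ ≤ f.pole j := f.pole_strictMono.monotone (by simp [Fin.le_def])
    linarith
  rw [h] at h2
  simp at h2

lemma fdown_ne_zero {x : ℝ} (hx : ∀ k, f.pole k ≠ x) : f.fdown x ≠ 0 :=
  mul_ne_zero f.h0'_ne (by rw [← pQ_eval]; exact (f.pQ_eval_ne_zero_iff x).mpr hx)

lemma eval_lt_eval (hd : 0 < f.d) {a b : ℝ} (hab : a < b)
    (hp : ∀ k, f.pole k < a ∨ b < f.pole k) : f.eval a < f.eval b := by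
  have hterm : ∀ k : Fin f.d, f.delta k / (f.pole k - a) < f.delta k / (f.pole k - b) := by
    intro k
    rcases hp k with hk | hk
    · have h1 : (0:ℝ) < a - f.pole k := by linarith
      have h2 : a - f.pole k < b - f.pole k := by linarith
      have h3 := div_lt_div_of_pos_left (f.delta_pos k) h1 h2
      have e1 : f.pole k - a = -(a - f.pole k) := by ring
      have e2 : f.pole k - b = -(b - f.pole k) := by ring
      rw [e1, e2, div_neg, div_neg]
      linarith
    · exact div_lt_div_of_pos_left (f.delta_pos k) (by linarith) (by linarith)
  have hne : Nonempty (Fin f.d) := ⟨⟨0, hd⟩⟩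
  have hsum := Finset.sum_lt_sum_of_nonempty Finset.univ_nonempty (fun k _ => hterm k)
  have hlin : f.h0 * a ≤ f.h0 * b := mul_le_mul_of_nonneg_left hab.le f.h0_nonneg
  unfold eval
  linarith

/-- Two distinct solutions of `f = τ` are separated by a pole. -/
lemma not_roots_no_pole (hd : 0 < f.d) {tau a b : ℝ} (hab : a < b)
    (hp : ∀ k, f.pole k ∉ Set.Icc a b)
    (hfa : f.eval a = tau) (hfb : f.eval b = tau) : False := by
  have : f.eval a < f.eval b := by
    refine f.eval_lt_eval hd hab fun k => ?_
    by_cases h : f.pole k < a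
    · exact Or.inl h
    · refine Or.inr ?_
      by_contra h2
      exact hp k ⟨le_of_not_gt h, le_of_not_gt h2⟩
  rw [hfa, hfb] at this
  exact lt_irrefl _ this

lemma continuousAt_eval {x : ℝ} (hx : ∀ k, f.pole k ≠ x) : ContinuousAt f.eval x := by
  have : ContinuousAt (fun y => f.h0 * y + f.h + ∑ k, f.delta k / (f.pole k - y)) x := by
    refine ((continuousAt_const.mul continuousAt_id).add continuousAt_const).add ?_
    refine tendsto_finset_sum _ fun k _ => ?_
    exact ContinuousAt.div continuousAt_const (continuousAt_const.sub continuousAt_id)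
      (sub_ne_zero.mpr (hx k))
  exact this

lemma tendsto_sub_nhdsGT (p : ℝ) :
    Tendsto (fun x => p - x) (𝓝[<] p) (𝓝[>] (0:ℝ)) := by
  apply tendsto_nhdsWithin_of_tendsto_nhds_of_eventually_within
  · have h : Tendsto (fun x : ℝ => p - x) (𝓝 p) (𝓝 (p - p)) :=
      (continuous_const.sub continuous_id).tendsto p
    simpa using h.mono_left nhdsWithin_le_nhds
  · filter_upwards [self_mem_nhdsWithin] with y hy
    simp only [Set.mem_Iio] at hy
    simpa [Set.mem_Ioi] using sub_pos.mpr hy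

lemma tendsto_sub_nhdsGT' (p : ℝ) :
    Tendsto (fun x => x - p) (𝓝[>] p) (𝓝[>] (0:ℝ)) := by
  apply tendsto_nhdsWithin_of_tendsto_nhds_of_eventually_within
  · have h : Tendsto (fun x : ℝ => x - p) (𝓝 p) (𝓝 (p - p)) :=
      (continuous_id.sub continuous_const).tendsto p
    simpa using h.mono_left nhdsWithin_le_nhds
  · filter_upwards [self_mem_nhdsWithin] with y hy
    simp only [Set.mem_Ioi] at hy
    simpa [Set.mem_Ioi] using sub_pos.mpr hy

lemma tendsto_rest (k : Fin f.d) (l : Filter ℝ) (hl : l ≤ 𝓝 (f.pole k)) :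
    Tendsto (fun x => f.h0 * x + f.h + ∑ j ∈ Finset.univ.erase k, f.delta j / (f.pole j - x)) l
      (𝓝 (f.h0 * f.pole k + f.h +
        ∑ j ∈ Finset.univ.erase k, f.delta j / (f.pole j - f.pole k))) := by
  have hc : ContinuousAt (fun x => f.h0 * x + f.h +
      ∑ j ∈ Finset.univ.erase k, f.delta j / (f.pole j - x)) (f.pole k) := by
    refine ((continuousAt_const.mul continuousAt_id).add continuousAt_const).add ?_
    refine tendsto_finset_sum _ fun j hj => ?_
    exact ContinuousAt.div continuousAt_const (continuousAt_const.sub continuousAt_id)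
      (sub_ne_zero.mpr (f.pole_strictMono.injective.ne (Finset.ne_of_mem_erase hj)))
  exact hc.mono_left hl

lemma tendsto_eval_atTop (k : Fin f.d) : Tendsto f.eval (𝓝[<] (f.pole k)) atTop := by
  have hmain : Tendsto (fun x => f.delta k / (f.pole k - x)) (𝓝[<] (f.pole k)) atTop := by
    have h2 := tendsto_inv_nhdsGT_zero.comp (tendsto_sub_nhdsGT (f.pole k))
    have h3 := h2.const_mul_atTop (f.delta_pos k)
    exact h3.congr fun x => by simp [div_eq_mul_inv, Function.comp]
  have := hmain.atTop_add (f.tendsto_rest k _ nhdsWithin_le_nhds)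
  refine this.congr fun x => ?_
  rw [RHN.eval, ← Finset.add_sum_erase _ _ (Finset.mem_univ k)]
  ring

lemma tendsto_eval_atBot (k : Fin f.d) : Tendsto f.eval (𝓝[>] (f.pole k)) atBot := by
  have hmain : Tendsto (fun x => f.delta k / (f.pole k - x)) (𝓝[>] (f.pole k)) atBot := by
    have h2 := tendsto_inv_nhdsGT_zero.comp (tendsto_sub_nhdsGT' (f.pole k))
    have h3 := h2.const_mul_atTop (f.delta_pos k)
    have h4 := tendsto_neg_atTop_atBot.comp h3
    refine h4.congr fun x => ?_
    simp only [Function.comp_apply]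
    rw [show f.pole k - x = -(x - f.pole k) by ring, div_neg, div_eq_mul_inv]
  have := hmain.atBot_add (f.tendsto_rest k _ nhdsWithin_le_nhds)
  refine this.congr fun x => ?_
  rw [RHN.eval, ← Finset.add_sum_erase _ _ (Finset.mem_univ k)]
  ring

/-- Core IVT lemma: if `f x < τ` and the next pole is at `b > x` with no poles in `[x,b)`,
then `f = τ` somewhere in `(x, b)`. -/
lemma exists_root_core (tau : ℝ) {x : ℝ} {l : Fin f.d} (hxb : x < f.pole l)
    (hin : ∀ m, f.pole m ∉ Set.Ico x (f.pole l))
    (hfx : f.eval x < tau) :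
    ∃ z ∈ Set.Ioo x (f.pole l), f.eval z = tau := by
  obtain ⟨y, hy1, hy2⟩ : ∃ y, y ∈ Set.Ioo x (f.pole l) ∧ tau < f.eval y := by
    have h1 : ∀ᶠ y in 𝓝[<] (f.pole l), y ∈ Set.Ioo x (f.pole l) :=
      Ioo_mem_nhdsLT_of_mem ⟨hxb, le_refl _⟩
    have h2 : ∀ᶠ y in 𝓝[<] (f.pole l), tau < f.eval y :=
      (f.tendsto_eval_atTop l).eventually (eventually_gt_atTop tau)
    exact (h1.and h2).exists
  have hcont : ContinuousOn f.eval (Set.Icc x y) := by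
    intro z hz
    refine (f.continuousAt_eval fun m hm => ?_).continuousWithinAt
    exact hin m ⟨hm ▸ hz.1, hm ▸ lt_of_le_of_lt hz.2 hy1.2⟩
  obtain ⟨z, hz, hfz⟩ := intermediate_value_Ioo hy1.1.le hcont ⟨hfx, hy2⟩
  exact ⟨z, ⟨hz.1, lt_trans hz.2 hy1.2⟩, hfz⟩

/-- Between two poles with none in between there is a solution of `f = τ`. -/
lemma exists_root_between (tau : ℝ) {k l : Fin f.d} (hkl : f.pole k < f.pole l)
    (hin : ∀ m, f.pole m ∉ Set.Ioo (f.pole k) (f.pole l)) :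
    ∃ z ∈ Set.Ioo (f.pole k) (f.pole l), f.eval z = tau := by
  obtain ⟨x, hx1, hx2⟩ : ∃ x, x ∈ Set.Ioo (f.pole k) (f.pole l) ∧ f.eval x < tau := by
    have h1 : ∀ᶠ y in 𝓝[>] (f.pole k), y ∈ Set.Ioo (f.pole k) (f.pole l) :=
      Ioo_mem_nhdsGT_of_mem ⟨le_refl _, hkl⟩
    have h2 : ∀ᶠ y in 𝓝[>] (f.pole k), f.eval y < tau :=
      (f.tendsto_eval_atBot k).eventually (eventually_lt_atBot tau)
    exact (h1.and h2).exists
  obtain ⟨z, hz, hfz⟩ := f.exists_root_core tau hx1.2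
    (fun m hm => hin m ⟨lt_of_lt_of_le hx1.1 hm.1, hm.2⟩) hx2
  exact ⟨z, ⟨lt_trans hx1.1 hz.1, hz.2⟩, hfz⟩

end RHN

open RHN in
/-- Key polynomial identity extracted from the functional equation of `Θ`. -/
lemma theta_key (f g : RHN) (mu tau rho : ℝ) (hfd : 0 < f.d) (hgd : 0 < g.d)
    (hform : ∀ x, f.fdown x ≠ 0 → f.eval x ≠ tau → g.fdown x ≠ 0 →
        g.eval x = (mu - x) / (f.eval x - tau) + rho) :
    (g.pP - C rho * g.pQ) * (f.pP - C tau * f.pQ) = (C mu - X) * g.pQ * f.pQ := by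
  apply Polynomial.eq_of_infinite_eval_eq
  have hBne : f.pP - C tau * f.pQ ≠ 0 := by
    intro h
    have h2 := congrArg (Polynomial.eval (f.pole ⟨0, hfd⟩)) h
    have hq : f.pQ.eval (f.pole ⟨0, hfd⟩) = 0 := by
      rw [pQ_eval]
      exact Finset.prod_eq_zero (Finset.mem_univ ⟨0, hfd⟩) (sub_self (f.pole ⟨0, hfd⟩))
    simp only [eval_sub, eval_mul, eval_C, eval_zero, hq, mul_zero, sub_zero] at h2
    exact f.pP_eval_pole_ne _ h2
  have hfin : ({x : ℝ | f.pQ.IsRoot x} ∪ {x | (f.pP - C tau * f.pQ).IsRoot x}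
      ∪ {x | g.pQ.IsRoot x}).Finite :=
    ((Polynomial.finite_setOf_isRoot (f.pQ_ne_zero hfd)).union
      (Polynomial.finite_setOf_isRoot hBne)).union
      (Polynomial.finite_setOf_isRoot (g.pQ_ne_zero hgd))
  refine hfin.infinite_compl.mono fun x hx => ?_
  simp only [Set.mem_compl_iff, Set.mem_union, Set.mem_setOf_eq, not_or, IsRoot.def] at hx
  obtain ⟨⟨hQf, hBx⟩, hQg⟩ := hx
  have hpf : ∀ k, f.pole k ≠ x := (f.pQ_eval_ne_zero_iff x).mp hQf
  have hpg : ∀ k, g.pole k ≠ x := (g.pQ_eval_ne_zero_iff x).mp hQg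
  have hftau : f.eval x ≠ tau := by
    intro h
    apply hBx
    simp [eval_sub, eval_mul, eval_C, f.pP_eval_eq hpf, h]
  have heq := hform x (f.fdown_ne_zero hpf) hftau (g.fdown_ne_zero hpg)
  have h3 : (g.eval x - rho) * (f.eval x - tau) = mu - x := by
    rw [heq]
    field_simp [sub_ne_zero.mpr hftau]
    ring
  show Polynomial.eval x _ = Polynomial.eval x _
  simp only [eval_mul, eval_sub, eval_C, eval_X, f.pP_eval_eq hpf, g.pP_eval_eq hpg]
  linear_combination (g.pQ.eval x * f.pQ.eval x) * h3

end ThetaAux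
/-- If `μ < π̊(f)`, `τ ≥ f(μ)`, `g = Θ(μ,τ,ρ,f)`, and both `f` and `g` have at least one
pole, then the poles of `f` and `g` strictly interlace (between any two consecutive poles
of one function lies exactly one pole of the other, and no poles coincide); moreover
`π̊(f) < π̊(g)` if `τ = f(μ)` and `π̊(f) > π̊(g)` if `τ > f(μ)`. -/
theorem theta_poles_interlace
    (f g : RHN) (mu tau rho : ℝ)
    (hmu : (mu : EReal) < f.mpole) (htau : f.eval mu ≤ tau)
    (hg : IsTheta mu tau rho (some f) (some g))
    (hfd : 1 ≤ f.d) (hgd : 1 ≤ g.d) :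
    (∀ (k : Fin f.d) (j : Fin g.d), f.pole k ≠ g.pole j) ∧
    (∀ (k : ℕ) (hk : k + 1 < f.d),
      ∃! j : Fin g.d,
        g.pole j ∈ Set.Ioo (f.pole ⟨k, Nat.lt_of_succ_lt hk⟩) (f.pole ⟨k + 1, hk⟩)) ∧
    (∀ (k : ℕ) (hk : k + 1 < g.d),
      ∃! j : Fin f.d,
        f.pole j ∈ Set.Ioo (g.pole ⟨k, Nat.lt_of_succ_lt hk⟩) (g.pole ⟨k + 1, hk⟩)) ∧
    (tau = f.eval mu → f.mpole < g.mpole) ∧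
    (f.eval mu < tau → g.mpole < f.mpole) := by
  classical
  obtain ⟨hnc, hform⟩ := hg
  have hfd' : 0 < f.d := hfd
  have hgd' : 0 < g.d := hgd
  have key := theta_key f g mu tau rho hfd' hgd' hform
  have hmu0 : mu < f.pole ⟨0, hfd'⟩ := by
    rw [RHN.mpole, dif_pos hfd'] at hmu
    exact_mod_cast hmu
  have hpole0_le : ∀ k : Fin f.d, f.pole ⟨0, hfd'⟩ ≤ f.pole k := fun k =>
    f.pole_strictMono.monotone (by simp [Fin.le_def])
  have hmuk : ∀ k, mu < f.pole k := fun k => lt_of_lt_of_le hmu0 (hpole0_le k)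
  have hQf0 : ∀ k : Fin f.d, f.pQ.eval (f.pole k) = 0 := fun k =>
    (f.pQ_eval_zero_iff _).mpr ⟨k, rfl⟩
  have hQg0 : ∀ j : Fin g.d, g.pQ.eval (g.pole j) = 0 := fun j =>
    (g.pQ_eval_zero_iff _).mpr ⟨j, rfl⟩
  -- poles of `f` and `g` are disjoint
  have disj : ∀ (k : Fin f.d) (j : Fin g.d), f.pole k ≠ g.pole j := by
    intro k j he
    have h1 := congrArg (Polynomial.eval (f.pole k)) key
    simp only [Polynomial.eval_mul, Polynomial.eval_sub, Polynomial.eval_C,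
      Polynomial.eval_X] at h1
    have e1 : g.pQ.eval (f.pole k) = 0 := by rw [he]; exact hQg0 j
    have e2 : f.pQ.eval (f.pole k) = 0 := hQf0 k
    rw [e1, e2] at h1
    simp only [mul_zero, zero_mul, sub_zero] at h1
    rcases mul_eq_zero.mp h1 with h | h
    · exact (by rw [he]; exact g.pP_eval_pole_ne j : g.pP.eval (f.pole k) ≠ 0) h
    · exact f.pP_eval_pole_ne k h
  -- every pole of `g` is a solution of `f = τ`
  have hgroot : ∀ j : Fin g.d, f.eval (g.pole j) = tau := by
    intro j
    have hnp : ∀ k, f.pole k ≠ g.pole j := fun k => disj k j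
    have h1 := congrArg (Polynomial.eval (g.pole j)) key
    simp only [Polynomial.eval_mul, Polynomial.eval_sub, Polynomial.eval_C,
      Polynomial.eval_X] at h1
    rw [hQg0 j] at h1
    simp only [mul_zero, sub_zero, zero_mul] at h1
    have h2 : f.pP.eval (g.pole j) - tau * f.pQ.eval (g.pole j) = 0 := by
      rcases mul_eq_zero.mp h1 with h | h
      · exact absurd h (g.pP_eval_pole_ne j)
      · exact h
    rw [f.pP_eval_eq hnp] at h2
    have hQ := (f.pQ_eval_ne_zero_iff _).mpr hnp
    have h3 : (f.eval (g.pole j) - tau) * f.pQ.eval (g.pole j) = 0 := by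
      linear_combination h2
    rcases mul_eq_zero.mp h3 with h | h
    · exact sub_eq_zero.mp h
    · exact absurd h hQ
  -- every solution of `f = τ` other than `μ` is a pole of `g`
  have hrootg : ∀ z : ℝ, (∀ k, f.pole k ≠ z) → f.eval z = tau → z ≠ mu →
      ∃ j : Fin g.d, g.pole j = z := by
    intro z hz hfz hzmu
    have h1 := congrArg (Polynomial.eval z) key
    simp only [Polynomial.eval_mul, Polynomial.eval_sub, Polynomial.eval_C,
      Polynomial.eval_X] at h1
    rw [f.pP_eval_eq hz, hfz] at h1
    have h2 : (mu - z) * g.pQ.eval z * f.pQ.eval z = 0 := by linear_combination -h1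
    have hQf := (f.pQ_eval_ne_zero_iff z).mpr hz
    have hmz : mu - z ≠ 0 := sub_ne_zero.mpr (Ne.symm hzmu)
    have h3 : g.pQ.eval z = 0 := by
      rcases mul_eq_zero.mp h2 with h | h
      · rcases mul_eq_zero.mp h with h' | h'
        · exact absurd h' hmz
        · exact h'
      · exact absurd h hQf
    exact (g.pQ_eval_zero_iff z).mp h3
  -- when τ = f(μ), μ is not a pole of g (a double-root argument)
  have hcrux : tau = f.eval mu → ∀ j : Fin g.d, g.pole j ≠ mu := by
    intro ht j hj
    set B : Polynomial ℝ := f.pP - Polynomial.C tau * f.pQ with hBdef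
    have hpne : ∀ k, f.pole k ≠ mu := fun k => (hmuk k).ne'
    have hQmu : f.pQ.eval mu ≠ 0 := (f.pQ_eval_ne_zero_iff mu).mpr hpne
    have hQgfac : g.pQ = (Polynomial.C mu - Polynomial.X) *
        ∏ i ∈ Finset.univ.erase j, (Polynomial.C (g.pole i) - Polynomial.X) := by
      rw [RHN.pQ, ← Finset.mul_prod_erase Finset.univ _ (Finset.mem_univ j), hj]
    have hdvd2 : (Polynomial.X - Polynomial.C mu) ^ 2 ∣
        (g.pP - Polynomial.C rho * g.pQ) * B := by
      refine ⟨(∏ i ∈ Finset.univ.erase j, (Polynomial.C (g.pole i) - Polynomial.X)) * f.pQ, ?_⟩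
      rw [hBdef, key, hQgfac]
      ring
    have hnd : ¬ (Polynomial.X - Polynomial.C mu) ∣ (g.pP - Polynomial.C rho * g.pQ) := by
      rw [Polynomial.dvd_iff_isRoot]
      intro hroot
      rw [Polynomial.IsRoot.def] at hroot
      rw [← hj] at hroot
      simp only [Polynomial.eval_sub, Polynomial.eval_mul, Polynomial.eval_C] at hroot
      rw [hQg0 j, mul_zero, sub_zero] at hroot
      exact g.pP_eval_pole_ne j hroot
    obtain ⟨c, hc⟩ := (Polynomial.prime_X_sub_C mu).pow_dvd_of_dvd_mul_left 2 hnd hdvd2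
    have hder0 : (Polynomial.derivative B).eval mu = 0 := by
      rw [hc]
      simp [Polynomial.derivative_mul, Polynomial.derivative_pow]
    -- analytic computation of the same derivative
    have hD : HasDerivAt f.eval (f.h0 + ∑ k, f.delta k / (f.pole k - mu) ^ 2) mu := by
      have hterm : ∀ k : Fin f.d, HasDerivAt (fun x => f.delta k / (f.pole k - x))
          (f.delta k / (f.pole k - mu) ^ 2) mu := by
        intro k
        have h1 : HasDerivAt (fun x : ℝ => f.pole k - x) (-1) mu :=
          (hasDerivAt_id mu).const_sub (f.pole k)
        have h2 := HasDerivAt.const_mul (f.delta k) (h1.inv (sub_ne_zero.mpr (hpne k)))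
        have h3 : HasDerivAt (fun x => f.delta k / (f.pole k - x))
            (f.delta k * (-(-1) / (f.pole k - mu) ^ 2)) mu :=
          h2.congr_of_eventuallyEq (Filter.Eventually.of_forall fun y => div_eq_mul_inv _ _)
        have e : f.delta k * (-(-1) / (f.pole k - mu) ^ 2)
            = f.delta k / (f.pole k - mu) ^ 2 := by ring
        rw [e] at h3
        exact h3
      have hlin : HasDerivAt (fun x : ℝ => f.h0 * x + f.h) f.h0 mu := by
        simpa using (HasDerivAt.const_mul f.h0 (hasDerivAt_id mu)).add_const f.h
      exact hlin.add (HasDerivAt.fun_sum fun k _ => hterm k)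
    have hprod := (hD.sub_const tau).mul (Polynomial.hasDerivAt f.pQ mu)
    have hev : (fun x => Polynomial.eval x B) =ᶠ[nhds mu]
        (fun x => (f.eval x - tau) * f.pQ.eval x) := by
      have hco : Continuous fun x : ℝ => f.pQ.eval x := f.pQ.continuous
      have hopen : IsOpen {x : ℝ | f.pQ.eval x ≠ 0} := isOpen_compl_singleton.preimage hco
      refine Filter.eventuallyEq_of_mem (hopen.mem_nhds hQmu) fun x hx => ?_
      have hxk := (f.pQ_eval_ne_zero_iff x).mp hx
      show Polynomial.eval x B = _
      rw [hBdef]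
      simp only [Polynomial.eval_sub, Polynomial.eval_mul, Polynomial.eval_C,
        f.pP_eval_eq hxk]
      ring
    have hBderiv : (Polynomial.derivative B).eval mu =
        (f.h0 + ∑ k, f.delta k / (f.pole k - mu) ^ 2) * f.pQ.eval mu
          + (f.eval mu - tau) * (f.pQ.eval mu) * 0
          + (f.eval mu - tau) * (Polynomial.derivative f.pQ).eval mu := by
      rw [← Polynomial.deriv, hev.deriv_eq,
        (show HasDerivAt (fun x => (f.eval x - tau) * f.pQ.eval x) _ mu by exact hprod).deriv]
      ring
    rw [← ht, sub_self, hder0] at hBderiv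
    simp only [zero_mul, mul_zero, add_zero, zero_add] at hBderiv
    have hne : Nonempty (Fin f.d) := ⟨⟨0, hfd'⟩⟩
    have hsum_pos : 0 < f.h0 + ∑ k, f.delta k / (f.pole k - mu) ^ 2 := by
      have hs : 0 < ∑ k, f.delta k / (f.pole k - mu) ^ 2 :=
        Finset.sum_pos (fun k _ => div_pos (f.delta_pos k)
          (sq_pos_of_ne_zero (sub_ne_zero.mpr (hpne k)))) Finset.univ_nonempty
      linarith [f.h0_nonneg]
    exact mul_ne_zero hsum_pos.ne' hQmu hBderiv.symm
  -- a uniqueness helper: at most one pole of `g` between poles of `f`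
  have uniq_g : ∀ {a b : ℝ}, (∀ m, f.pole m ∉ Set.Ioo a b) → ∀ j j' : Fin g.d,
      g.pole j ∈ Set.Ioo a b → g.pole j' ∈ Set.Ioo a b → j' = j := by
    intro a b hno j j' hjm hjm'
    by_contra hne
    have hjj : g.pole j' ≠ g.pole j := fun h => hne (g.pole_strictMono.injective h)
    have hIcc : ∀ u v : Fin g.d, g.pole u ∈ Set.Ioo a b → g.pole v ∈ Set.Ioo a b →
        g.pole u < g.pole v → False := by
      intro u v hu hv huv
      exact f.not_roots_no_pole hfd' huv
        (fun m hm => hno m ⟨lt_of_lt_of_le hu.1 hm.1, lt_of_le_of_lt hm.2 hv.2⟩)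
        (hgroot u) (hgroot v)
    rcases lt_or_gt_of_ne hjj with h | h
    · exact hIcc j' j hjm' hjm h
    · exact hIcc j j' hjm hjm' h
  have part2 : ∀ (k : ℕ) (hk : k + 1 < f.d),
      ∃! j : Fin g.d,
        g.pole j ∈ Set.Ioo (f.pole ⟨k, Nat.lt_of_succ_lt hk⟩) (f.pole ⟨k + 1, hk⟩) := by
    intro k hk
    have hab : f.pole ⟨k, Nat.lt_of_succ_lt hk⟩ < f.pole ⟨k + 1, hk⟩ :=
      f.pole_strictMono (by simp [Fin.lt_def])
    have hno : ∀ m, f.pole m ∉ Set.Ioo (f.pole ⟨k, Nat.lt_of_succ_lt hk⟩)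
        (f.pole ⟨k + 1, hk⟩) := by
      intro m hm
      have h1 := Fin.lt_def.mp (f.pole_strictMono.lt_iff_lt.mp hm.1)
      have h2 := Fin.lt_def.mp (f.pole_strictMono.lt_iff_lt.mp hm.2)
      simp only [] at h1 h2
      omega
    obtain ⟨z, hz, hfz⟩ := f.exists_root_between tau hab hno
    have hmz : mu < z := lt_trans (hmuk _) hz.1
    have hznp : ∀ m, f.pole m ≠ z := fun m hm => hno m (by rw [← hm] at hz; exact hz)
    obtain ⟨j, hjz⟩ := hrootg z hznp hfz hmz.ne'
    have hjmem : g.pole j ∈ Set.Ioo (f.pole ⟨k, Nat.lt_of_succ_lt hk⟩) (f.pole ⟨k + 1, hk⟩) := by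
      rw [hjz]; exact hz
    exact ⟨j, hjmem, fun j' hj' => uniq_g hno j j' hjmem hj'⟩
  have part3 : ∀ (k : ℕ) (hk : k + 1 < g.d),
      ∃! j : Fin f.d,
        f.pole j ∈ Set.Ioo (g.pole ⟨k, Nat.lt_of_succ_lt hk⟩) (g.pole ⟨k + 1, hk⟩) := by
    intro k hk
    have hab : g.pole ⟨k, Nat.lt_of_succ_lt hk⟩ < g.pole ⟨k + 1, hk⟩ :=
      g.pole_strictMono (by simp [Fin.lt_def])
    have hnog : ∀ m, g.pole m ∉ Set.Ioo (g.pole ⟨k, Nat.lt_of_succ_lt hk⟩)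
        (g.pole ⟨k + 1, hk⟩) := by
      intro m hm
      have h1 := Fin.lt_def.mp (g.pole_strictMono.lt_iff_lt.mp hm.1)
      have h2 := Fin.lt_def.mp (g.pole_strictMono.lt_iff_lt.mp hm.2)
      simp only [] at h1 h2
      omega
    obtain ⟨m, hm⟩ : ∃ m : Fin f.d, f.pole m ∈ Set.Ioo (g.pole ⟨k, Nat.lt_of_succ_lt hk⟩)
        (g.pole ⟨k + 1, hk⟩) := by
      by_contra hcon
      push_neg at hcon
      refine f.not_roots_no_pole hfd' hab (fun m hmem => ?_) (hgroot _) (hgroot _)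
      rcases eq_or_lt_of_le hmem.1 with h | h
      · exact disj m _ h.symm
      · rcases eq_or_lt_of_le hmem.2 with h2 | h2
        · exact disj m _ h2
        · exact hcon m ⟨h, h2⟩
    have hcore : ∀ u v : Fin f.d,
        f.pole u ∈ Set.Ioo (g.pole ⟨k, Nat.lt_of_succ_lt hk⟩) (g.pole ⟨k + 1, hk⟩) →
        f.pole v ∈ Set.Ioo (g.pole ⟨k, Nat.lt_of_succ_lt hk⟩) (g.pole ⟨k + 1, hk⟩) →
        f.pole u < f.pole v → False := by
      intro u v hu hv huv
      have huv' : (u : ℕ) < v := Fin.lt_def.mp (f.pole_strictMono.lt_iff_lt.mp huv)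
      have hu1 : (u : ℕ) + 1 < f.d := lt_of_le_of_lt (Nat.succ_le_of_lt huv') v.2
      have hlt : f.pole u < f.pole ⟨(u : ℕ) + 1, hu1⟩ :=
        f.pole_strictMono (by simp [Fin.lt_def])
      have hle : f.pole ⟨(u : ℕ) + 1, hu1⟩ ≤ f.pole v :=
        f.pole_strictMono.monotone (by simp [Fin.le_def]; omega)
      have hno2 : ∀ n, f.pole n ∉ Set.Ioo (f.pole u) (f.pole ⟨(u : ℕ) + 1, hu1⟩) := by
        intro n hn
        have h1 := Fin.lt_def.mp (f.pole_strictMono.lt_iff_lt.mp hn.1)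
        have h2 := Fin.lt_def.mp (f.pole_strictMono.lt_iff_lt.mp hn.2)
        simp only [] at h1 h2
        omega
      obtain ⟨z, hz, hfz⟩ := f.exists_root_between tau hlt hno2
      have hmz : mu < z := lt_trans (hmuk u) hz.1
      have hznp : ∀ n, f.pole n ≠ z := fun n hn => hno2 n (by rw [← hn] at hz; exact hz)
      obtain ⟨i, hi⟩ := hrootg z hznp hfz hmz.ne'
      refine hnog i ?_
      rw [hi]
      exact ⟨lt_trans hu.1 hz.1, lt_of_lt_of_le hz.2 (le_trans hle hv.2.le)⟩
    refine ⟨m, hm, fun j' hj' => ?_⟩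
    by_contra hne
    have hjm : f.pole j' ≠ f.pole m := fun h => hne (f.pole_strictMono.injective h)
    rcases lt_or_gt_of_ne hjm with h | h
    · exact hcore j' m hj' hm h
    · exact hcore m j' hm hj' h
  have part4 : tau = f.eval mu → f.mpole < g.mpole := by
    intro ht
    rw [RHN.mpole, RHN.mpole, dif_pos hfd', dif_pos hgd', EReal.coe_lt_coe_iff]
    by_contra hle
    push_neg at hle
    have hzne : ∀ k : Fin f.d, f.pole k ≠ g.pole ⟨0, hgd'⟩ := fun k => disj k _
    have hzlt : g.pole ⟨0, hgd'⟩ < f.pole ⟨0, hfd'⟩ := lt_of_le_of_ne hle ((hzne _).symm)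
    have hfz : f.eval (g.pole ⟨0, hgd'⟩) = tau := hgroot _
    have hzmu : g.pole ⟨0, hgd'⟩ ≠ mu := hcrux ht ⟨0, hgd'⟩
    rcases lt_or_gt_of_ne hzmu with h | h
    · have h2 := f.eval_lt_eval hfd' h (fun k => Or.inr (hmuk k))
      rw [hfz, ← ht] at h2
      exact lt_irrefl _ h2
    · have h2 := f.eval_lt_eval hfd' h
        (fun k => Or.inr (lt_of_lt_of_le hzlt (hpole0_le k)))
      rw [hfz, ← ht] at h2
      exact lt_irrefl _ h2
  have part5 : f.eval mu < tau → g.mpole < f.mpole := by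
    intro ht
    rw [RHN.mpole, RHN.mpole, dif_pos hfd', dif_pos hgd', EReal.coe_lt_coe_iff]
    have hin : ∀ m, f.pole m ∉ Set.Ico mu (f.pole ⟨0, hfd'⟩) := fun m hm =>
      absurd hm.2 (not_lt.mpr (hpole0_le m))
    obtain ⟨z, hz, hfz⟩ := f.exists_root_core tau hmu0 hin ht
    have hznp : ∀ m, f.pole m ≠ z := fun m hm => hin m (by rw [hm]; exact ⟨hz.1.le, hz.2⟩)
    obtain ⟨j, hj⟩ := hrootg z hznp hfz hz.1.ne'
    calc g.pole ⟨0, hgd'⟩ ≤ g.pole j := g.pole_strictMono.monotone (by simp [Fin.le_def])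
      _ = z := hj
      _ < f.pole ⟨0, hfd'⟩ := hz.2
  exact ⟨disj, ⟨part2, ⟨part3, ⟨part4, part5⟩⟩⟩⟩
end
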